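/- arXiv:1708.06080 — 3 statements merged into one kernel-verified Lean document; each statement's English description precedes it below -/
import Mathlib

section
/- For every v ∈ (0,1], every N ∈ ℕ₀ and every integer x ≤ N, one has E_x[v^{τ_N^+}; τ_N^+ < τ_{−1}^−] = W_v(x)/W_v(N); in particular the expectation E_0[v^{τ_y^+}; τ_y^+ < τ_{−1}^−] entering the definition of W_v is strictly positive for every y ∈ ℕ₀. -/
open MeasureTheory Set
open scoped ENNReal

noncomputable section

namespace RW

/-- Probability generating function of `p`. -/
def ptilde (p : ℕ → ℝ) (z : ℝ) : ℝ := ∑' k : ℕ, p k * z ^ k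

variable {Ω : Type*} [MeasurableSpace Ω]

/-- The upwards skip-free random walk started at `x` (driven by the claims `C`). -/
def walk (C : ℕ → Ω → ℕ) (x : ℤ) (n : ℕ) (ω : Ω) : ℤ :=
  x + n - ∑ i ∈ Finset.range n, (C i ω : ℤ)

/-- First passage time (weakly) below `b`, `= ⊤` if it never happens. -/
def tauMinus (C : ℕ → Ω → ℕ) (x b : ℤ) (ω : Ω) : ℕ∞ :=
  sInf ((fun n : ℕ => (n : ℕ∞)) '' {n : ℕ | walk C x n ω ≤ b})

/-- First passage time (weakly) above `b`, `= ⊤` if it never happens. -/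
def tauPlus (C : ℕ → Ω → ℕ) (x b : ℤ) (ω : Ω) : ℕ∞ :=
  sInf ((fun n : ℕ => (n : ℕ∞)) '' {n : ℕ | b ≤ walk C x n ω})

/-- `E[f ; A]`, the expectation of `f` on the event `A`. -/
def Eind (P : Measure Ω) (A : Set Ω) (f : Ω → ℝ) : ℝ := ∫ ω, A.indicator f ω ∂P

/-- The first scale function `W_v`. -/
def W (P : Measure Ω) (C : ℕ → Ω → ℕ) (v p0 : ℝ) (y : ℤ) : ℝ :=
  if 0 ≤ y then
    1 / (p0 * Eind P {ω | tauPlus C 0 y ω < tauMinus C 0 (-1) ω}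
          fun ω => v ^ (tauPlus C 0 y ω).toNat)
  else 0

/-- The joint transform of the ruin time and the deficit at ruin. -/
def Psi (P : Measure Ω) (C : ℕ → Ω → ℕ) (v w : ℝ) (x : ℤ) : ℝ :=
  Eind P {ω | tauMinus C x (-1) ω < ⊤}
    fun ω => v ^ (tauMinus C x (-1) ω).toNat *
      w ^ (-(walk C x (tauMinus C x (-1) ω).toNat ω))

/-- The second scale function `Z_v(·, w)` (normalized so that `Z_v(0,w) = 1`). -/
def Z (P : Measure Ω) (C : ℕ → Ω → ℕ) (v w p0 : ℝ) (x : ℤ) : ℝ :=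
  Psi P C v w x + p0 * (1 - Psi P C v w 0) * W P C v p0 x

/-- Cumulative capital injections of the walk reflected at `0`. -/
def Rstar (C : ℕ → Ω → ℕ) (x : ℤ) (n : ℕ) (ω : Ω) : ℤ :=
  max 0 (-(Finset.range (n + 1)).inf' Finset.nonempty_range_add_one fun m => walk C x m ω)

/-- First entrance time of the walk reflected at `0` into `[b, ∞)`. -/
def tauTildePlus (C : ℕ → Ω → ℕ) (x b : ℤ) (ω : Ω) : ℕ∞ :=
  sInf ((fun n : ℕ => (n : ℕ∞)) '' {n : ℕ | b ≤ walk C x n ω + Rstar C x n ω})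

/-- Cumulative dividends under the barrier policy at `b`. -/
def Rdiv (C : ℕ → Ω → ℕ) (x b : ℤ) (n : ℕ) (ω : Ω) : ℤ :=
  max 0 ((Finset.range (n + 1)).sup' Finset.nonempty_range_add_one fun m => walk C x m ω - b)

/-- Single-period dividends under the barrier policy at `b`. -/
def rdiv (C : ℕ → Ω → ℕ) (x b : ℤ) (n : ℕ) (ω : Ω) : ℤ :=
  Rdiv C x b n ω - if n = 0 then 0 else Rdiv C x b (n - 1) ω

/-- Ruin time of the walk reflected at the barrier `b`. -/
def Truin (C : ℕ → Ω → ℕ) (x b : ℤ) (ω : Ω) : ℕ∞ :=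
  sInf ((fun n : ℕ => (n : ℕ∞)) '' {n : ℕ | walk C x n ω - Rdiv C x b n ω ≤ -1})

lemma walk_stronglyMeasurable (C : ℕ → Ω → ℕ) (hC : ∀ i, Measurable (C i)) (x : ℤ) (n : ℕ) :
    StronglyMeasurable (walk C x n) := by
  have h : Measurable fun ω => ∑ i ∈ Finset.range n, (C i ω : ℤ) :=
    Finset.measurable_sum _ fun i _ => (measurable_from_top.comp (hC i))
  exact (measurable_const.sub h).stronglyMeasurable

/-! ### first passage time basics -/

lemma sInf_image_coe_eq (Q : Set ℕ) (h : Q.Nonempty) :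
    sInf ((fun n : ℕ => (n : ℕ∞)) '' Q) = ((sInf Q : ℕ) : ℕ∞) := by
  apply le_antisymm
  · exact sInf_le ⟨_, Nat.sInf_mem h, rfl⟩
  · refine le_sInf ?_
    rintro b ⟨m, hm, rfl⟩
    simp only [Nat.cast_le]
    exact Nat.sInf_le hm

lemma sInf_image_coe_empty (Q : Set ℕ) (h : ¬ Q.Nonempty) :
    sInf ((fun n : ℕ => (n : ℕ∞)) '' Q) = ⊤ := by
  rw [not_nonempty_iff_eq_empty] at h
  simp [h]

lemma sInf_image_coe_eq_iff {Q : Set ℕ} {n : ℕ} :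
    sInf ((fun n : ℕ => (n : ℕ∞)) '' Q) = (n : ℕ∞) ↔ n ∈ Q ∧ ∀ m < n, m ∉ Q := by
  by_cases h : Q.Nonempty
  · rw [sInf_image_coe_eq Q h, Nat.cast_inj]
    constructor
    · rintro rfl
      exact ⟨Nat.sInf_mem h, fun m hm => Nat.notMem_of_lt_sInf hm⟩
    · rintro ⟨h1, h2⟩
      refine le_antisymm (Nat.sInf_le h1) (le_of_not_gt fun hlt => h2 _ hlt (Nat.sInf_mem h))
  · rw [sInf_image_coe_empty Q h]
    constructor
    · intro ht; exact absurd ht (by simp)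
    · rintro ⟨h1, _⟩; exact absurd ⟨n, h1⟩ h

lemma lt_sInf_image_coe_iff {Q : Set ℕ} {n : ℕ} :
    (n : ℕ∞) < sInf ((fun n : ℕ => (n : ℕ∞)) '' Q) ↔ ∀ m ≤ n, m ∉ Q := by
  by_cases h : Q.Nonempty
  · rw [sInf_image_coe_eq Q h, Nat.cast_lt]
    constructor
    · intro hlt m hm
      exact Nat.notMem_of_lt_sInf (lt_of_le_of_lt hm hlt)
    · intro hall
      by_contra hle
      push_neg at hle
      exact hall _ hle (Nat.sInf_mem h)
  · rw [sInf_image_coe_empty Q h]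
    refine ⟨fun _ m _ hm => h ⟨m, hm⟩, fun _ => ?_⟩
    exact lt_of_le_of_ne le_top (by simp)

/-! ### walk basics -/

lemma walk_zero (C : ℕ → Ω → ℕ) (x : ℤ) (ω : Ω) : walk C x 0 ω = x := by
  simp [walk]

lemma walk_succ_le (C : ℕ → Ω → ℕ) (x : ℤ) (n : ℕ) (ω : Ω) :
    walk C x (n + 1) ω ≤ walk C x n ω + 1 := by
  simp only [walk, Finset.sum_range_succ]
  push_cast
  omega

lemma walk_shift (C : ℕ → Ω → ℕ) (x : ℤ) (t j : ℕ) (ω : Ω) :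
    walk (fun i => C (t + i)) (walk C x t ω) j ω = walk C x (t + j) ω := by
  simp only [walk, Finset.sum_range_add]
  push_cast
  ring



/-! ### the good events -/

def Gset (C : ℕ → Ω → ℕ) (x N : ℤ) (n : ℕ) : Set Ω :=
  {ω | N ≤ walk C x n ω ∧ (∀ m < n, walk C x m ω < N) ∧ ∀ m ≤ n, 0 ≤ walk C x m ω}

lemma mem_Gset_iff {C : ℕ → Ω → ℕ} {x N : ℤ} {n : ℕ} {ω : Ω} :
    ω ∈ Gset C x N n ↔
      tauPlus C x N ω = (n : ℕ∞) ∧ (n : ℕ∞) < tauMinus C x (-1) ω := by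
  rw [tauPlus, tauMinus, sInf_image_coe_eq_iff, lt_sInf_image_coe_iff]
  simp only [Gset, mem_setOf_eq, not_le]
  constructor
  · rintro ⟨h1, h2, h3⟩
    exact ⟨⟨h1, fun m hm => h2 m hm⟩, fun m hm => by have := h3 m hm; omega⟩
  · rintro ⟨⟨h1, h2⟩, h3⟩
    exact ⟨h1, fun m hm => h2 m hm, fun m hm => by have := h3 m hm; omega⟩

lemma event_eq_iUnion (C : ℕ → Ω → ℕ) (x N : ℤ) :
    {ω | tauPlus C x N ω < tauMinus C x (-1) ω} = ⋃ n : ℕ, Gset C x N n := by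
  ext ω
  simp only [mem_iUnion, mem_setOf_eq, mem_Gset_iff]
  constructor
  · intro h
    have hne : tauPlus C x N ω ≠ ⊤ := (h.trans_le le_top).ne
    obtain ⟨n, hn⟩ := WithTop.ne_top_iff_exists.mp hne
    exact ⟨n, hn.symm, lt_of_eq_of_lt hn h⟩
  · rintro ⟨n, h1, h2⟩
    rw [h1]; exact h2

lemma Gset_pairwise_disjoint (C : ℕ → Ω → ℕ) (x N : ℤ) :
    Pairwise (Function.onFun Disjoint fun n => Gset C x N n) := by
  intro a b hab
  refine Set.disjoint_left.mpr fun ω ha hb => hab ?_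
  have h1 := (mem_Gset_iff.mp ha).1
  have h2 := (mem_Gset_iff.mp hb).1
  exact_mod_cast h1.symm.trans h2



/-! ### cylinders -/

def restr (C : ℕ → Ω → ℕ) (t n : ℕ) (ω : Ω) : Fin n → ℕ := fun i => C (t + i) ω

def coordC (n : ℕ) : ℕ → (Fin n → ℕ) → ℕ := fun i c => if h : i < n then c ⟨i, h⟩ else 0

lemma measurable_restr (C : ℕ → Ω → ℕ) (hC : ∀ i, Measurable (C i)) (t n : ℕ) :
    Measurable (restr C t n) :=
  measurable_pi_lambda _ fun i => hC (t + i)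

example (n : ℕ) (Q : Set (Fin n → ℕ)) : MeasurableSet Q := Q.to_countable.measurableSet

lemma walk_coordC (C : ℕ → Ω → ℕ) (x : ℤ) (t n m : ℕ) (hm : m ≤ n) (ω : Ω) :
    walk (fun i => C (t + i)) x m ω = walk (coordC n) x m (restr C t n ω) := by
  simp only [walk]
  congr 1
  refine Finset.sum_congr rfl fun i hi => ?_
  have hi' : i < n := lt_of_lt_of_le (Finset.mem_range.mp hi) hm
  simp [coordC, restr, hi']

/-- the good event is a cylinder event. -/
lemma Gset_shift_eq_preimage (C : ℕ → Ω → ℕ) (x N : ℤ) (t n : ℕ) :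
    Gset (fun i => C (t + i)) x N n = restr C t n ⁻¹' Gset (coordC n) x N n := by
  ext ω
  simp only [Gset, mem_setOf_eq, mem_preimage]
  constructor
  · rintro ⟨h1, h2, h3⟩
    exact ⟨by rw [← walk_coordC C x t n n le_rfl]; exact h1,
      fun m hm => by rw [← walk_coordC C x t n m (le_of_lt hm)]; exact h2 m hm,
      fun m hm => by rw [← walk_coordC C x t n m hm]; exact h3 m hm⟩
  · rintro ⟨h1, h2, h3⟩
    exact ⟨by rw [walk_coordC C x t n n le_rfl]; exact h1,
      fun m hm => by rw [walk_coordC C x t n m (le_of_lt hm)]; exact h2 m hm,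
      fun m hm => by rw [walk_coordC C x t n m hm]; exact h3 m hm⟩

lemma Gset_eq_preimage (C : ℕ → Ω → ℕ) (x N : ℤ) (n : ℕ) :
    Gset C x N n = restr C 0 n ⁻¹' Gset (coordC n) x N n := by
  have h : (fun i => C (0 + i)) = C := by funext i; rw [Nat.zero_add]
  rw [← Gset_shift_eq_preimage C x N 0 n, h]

lemma measurableSet_Gset (C : ℕ → Ω → ℕ) (hC : ∀ i, Measurable (C i)) (x N : ℤ) (n : ℕ) :
    MeasurableSet (Gset C x N n) := by
  rw [Gset_eq_preimage]
  exact measurable_restr C hC 0 n ((Gset (coordC n) x N n).to_countable.measurableSet)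



/-! ### probabilities of cylinder events -/

def atomP (p : ℕ → ℝ) {n : ℕ} (c : Fin n → ℕ) : ℝ≥0∞ := ∏ i, ENNReal.ofReal (p (c i))

lemma atom_prob (P : Measure Ω) (C : ℕ → Ω → ℕ) (p : ℕ → ℝ)
    (hindep : ProbabilityTheory.iIndepFun C P)
    (hdist : ∀ i k, P {ω | C i ω = k} = ENNReal.ofReal (p k))
    (t n : ℕ) (c : Fin n → ℕ) :
    P (restr C t n ⁻¹' {c}) = atomP p c := by
  have hset : restr C t n ⁻¹' {c}
      = ⋂ j ∈ Finset.Ico t (t + n), C j ⁻¹' {coordC n (j - t) c} := by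
    ext ω
    simp only [mem_preimage, mem_singleton_iff, funext_iff, mem_iInter, Finset.mem_Ico, restr]
    constructor
    · rintro h j ⟨hj1, hj2⟩
      have hlt : j - t < n := by omega
      have : t + (⟨j - t, hlt⟩ : Fin n) = j := by simp; omega
      simp only [coordC, dif_pos hlt]
      have h2 := h ⟨j - t, hlt⟩
      rw [this] at h2
      exact h2
    · intro h i
      have := h (t + i) ⟨by omega, by omega⟩
      have ht : t + (i : ℕ) - t = (i : ℕ) := by omega
      rw [ht] at this
      simpa only [coordC, dif_pos i.isLt, Fin.eta] using this
  rw [hset, hindep.meas_biInter (fun j _ => ⟨{coordC n (j - t) c}, measurableSet_singleton _, rfl⟩)]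
  have hval : ∀ j, P (C j ⁻¹' {coordC n (j - t) c}) = ENNReal.ofReal (p (coordC n (j - t) c)) := by
    intro j
    rw [← hdist j (coordC n (j - t) c)]
    rfl
  rw [Finset.prod_congr rfl fun j _ => hval j, Finset.prod_Ico_eq_prod_range]
  have h1 : t + n - t = n := by omega
  rw [h1]
  have h2 : (∏ k ∈ Finset.range n, ENNReal.ofReal (p (coordC n (t + k - t) c)))
      = ∏ k ∈ Finset.range n, ENNReal.ofReal (p (coordC n k c)) :=
    Finset.prod_congr rfl fun k _ => by rw [show t + k - t = k by omega]
  rw [h2, atomP, ← Fin.prod_univ_eq_prod_range (fun k => ENNReal.ofReal (p (coordC n k c))) n]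
  exact Finset.prod_congr rfl fun i _ => by simp [coordC, i.isLt]

lemma cyl_prob (P : Measure Ω) (C : ℕ → Ω → ℕ) (p : ℕ → ℝ)
    (hC : ∀ i, Measurable (C i))
    (hindep : ProbabilityTheory.iIndepFun C P)
    (hdist : ∀ i k, P {ω | C i ω = k} = ENNReal.ofReal (p k))
    (t n : ℕ) (Q : Set (Fin n → ℕ)) :
    P (restr C t n ⁻¹' Q) = ∑' c : Fin n → ℕ, Q.indicator (atomP p) c := by
  classical
  have hdec : restr C t n ⁻¹' Q
      = ⋃ c : Fin n → ℕ, if c ∈ Q then restr C t n ⁻¹' {c} else ∅ := by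
    ext ω
    simp only [mem_preimage, mem_iUnion]
    constructor
    · intro h
      exact ⟨restr C t n ω, by rw [if_pos h]; exact rfl⟩
    · rintro ⟨c, hc⟩
      by_cases hcQ : c ∈ Q
      · rw [if_pos hcQ] at hc
        simp only [mem_preimage, mem_singleton_iff] at hc
        rwa [hc]
      · rw [if_neg hcQ] at hc; exact absurd hc (notMem_empty ω)
  rw [hdec, measure_iUnion ?_ ?_]
  · refine tsum_congr fun c => ?_
    by_cases hcQ : c ∈ Q
    · rw [if_pos hcQ, atom_prob P C p hindep hdist t n c, indicator_of_mem hcQ]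
    · rw [if_neg hcQ, measure_empty, indicator_of_notMem hcQ]
  · intro a b hab
    simp only [Function.onFun]
    split_ifs with h1 h2 h2
    · refine Set.disjoint_left.mpr fun ω hωa hωb => hab ?_
      have ha : restr C t n ω = a := hωa
      have hb : restr C t n ω = b := hωb
      exact ha.symm.trans hb
    · exact Set.disjoint_empty _
    · exact Set.empty_disjoint _
    · exact Set.empty_disjoint _
  · intro c
    split_ifs
    · exact measurable_restr C hC t n (measurableSet_singleton c)
    · exact MeasurableSet.empty



def blockEquiv (n m : ℕ) : ((Fin n → ℕ) × (Fin m → ℕ)) ≃ (Fin (n + m) → ℕ) :=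
  (Equiv.sumArrowEquivProdArrow (Fin n) (Fin m) ℕ).symm.trans
    (Equiv.arrowCongr finSumFinEquiv (Equiv.refl ℕ))

lemma blockEquiv_castAdd (n m : ℕ) (a : Fin n → ℕ) (b : Fin m → ℕ) (i : Fin n) :
    blockEquiv n m (a, b) (Fin.castAdd m i) = a i := by
  simp [blockEquiv, Equiv.sumArrowEquivProdArrow, Equiv.arrowCongr,
    finSumFinEquiv_symm_apply_castAdd]

lemma blockEquiv_natAdd (n m : ℕ) (a : Fin n → ℕ) (b : Fin m → ℕ) (j : Fin m) :
    blockEquiv n m (a, b) (Fin.natAdd n j) = b j := by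
  simp [blockEquiv, Equiv.sumArrowEquivProdArrow, Equiv.arrowCongr,
    finSumFinEquiv_symm_apply_natAdd]

lemma atomP_blockEquiv (p : ℕ → ℝ) (n m : ℕ) (a : Fin n → ℕ) (b : Fin m → ℕ) :
    atomP p (blockEquiv n m (a, b)) = atomP p a * atomP p b := by
  rw [atomP, Fin.prod_univ_add]
  congr 1
  · exact Finset.prod_congr rfl fun i _ => by rw [blockEquiv_castAdd]
  · exact Finset.prod_congr rfl fun j _ => by rw [blockEquiv_natAdd]

lemma block_indep (P : Measure Ω) (C : ℕ → Ω → ℕ) (p : ℕ → ℝ)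
    (hC : ∀ i, Measurable (C i))
    (hindep : ProbabilityTheory.iIndepFun C P)
    (hdist : ∀ i k, P {ω | C i ω = k} = ENNReal.ofReal (p k))
    (n m : ℕ) (Q1 : Set (Fin n → ℕ)) (Q2 : Set (Fin m → ℕ)) :
    P (restr C 0 n ⁻¹' Q1 ∩ restr C n m ⁻¹' Q2)
      = P (restr C 0 n ⁻¹' Q1) * P (restr C n m ⁻¹' Q2) := by
  classical
  set Q : Set (Fin (n + m) → ℕ) :=
    {c | (fun i : Fin n => c (Fin.castAdd m i)) ∈ Q1 ∧
         (fun j : Fin m => c (Fin.natAdd n j)) ∈ Q2} with hQ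
  have hsplit : restr C 0 n ⁻¹' Q1 ∩ restr C n m ⁻¹' Q2 = restr C 0 (n + m) ⁻¹' Q := by
    ext ω
    simp only [mem_inter_iff, mem_preimage, hQ, mem_setOf_eq]
    have e1 : (fun i : Fin n => restr C 0 (n + m) ω (Fin.castAdd m i)) = restr C 0 n ω := rfl
    have e2 : (fun j : Fin m => restr C 0 (n + m) ω (Fin.natAdd n j)) = restr C n m ω := by
      funext j
      show C (0 + (n + (j : ℕ))) ω = C (n + (j : ℕ)) ω
      rw [Nat.zero_add]
    rw [e1, e2]
  rw [hsplit, cyl_prob P C p hC hindep hdist 0 (n + m) Q,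
      cyl_prob P C p hC hindep hdist 0 n Q1, cyl_prob P C p hC hindep hdist n m Q2]
  rw [← Equiv.tsum_eq (blockEquiv n m) (Q.indicator (atomP p))]
  have key : ∀ q : (Fin n → ℕ) × (Fin m → ℕ),
      Q.indicator (atomP p) (blockEquiv n m q)
        = Q1.indicator (atomP p) q.1 * Q2.indicator (atomP p) q.2 := by
    rintro ⟨a, b⟩
    have hmem : blockEquiv n m (a, b) ∈ Q ↔ a ∈ Q1 ∧ b ∈ Q2 := by
      simp only [hQ, mem_setOf_eq]
      have e1 : (fun i : Fin n => blockEquiv n m (a, b) (Fin.castAdd m i)) = a := by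
        funext i; exact blockEquiv_castAdd n m a b i
      have e2 : (fun j : Fin m => blockEquiv n m (a, b) (Fin.natAdd n j)) = b := by
        funext j; exact blockEquiv_natAdd n m a b j
      rw [e1, e2]
    by_cases h1 : a ∈ Q1 <;> by_cases h2 : b ∈ Q2
    · rw [indicator_of_mem (hmem.mpr ⟨h1, h2⟩), indicator_of_mem h1, indicator_of_mem h2,
        atomP_blockEquiv]
    · rw [indicator_of_notMem (fun h => h2 (hmem.mp h).2), indicator_of_notMem h2, mul_zero]
    · rw [indicator_of_notMem (fun h => h1 (hmem.mp h).1), indicator_of_notMem h1, zero_mul]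
    · rw [indicator_of_notMem (fun h => h1 (hmem.mp h).1), indicator_of_notMem h1, zero_mul]
  rw [tsum_congr key, ENNReal.tsum_prod']
  simp only [ENNReal.tsum_mul_left, ENNReal.tsum_mul_right]



lemma walk_first_hit (C : ℕ → Ω → ℕ) {x : ℤ} (hx0 : 0 ≤ x) {n : ℕ} (ω : Ω)
    (h1 : x ≤ walk C 0 n ω) (h2 : ∀ m < n, walk C 0 m ω < x) : walk C 0 n ω = x := by
  cases n with
  | zero => rw [walk_zero] at h1 ⊢; omega
  | succ k =>
    have ha := walk_succ_le C 0 k ω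
    have hb := h2 k (Nat.lt_succ_self k)
    omega

lemma Gset_decomp (C : ℕ → Ω → ℕ) {x N : ℤ} (hx0 : 0 ≤ x) (hxN : x ≤ N) (K : ℕ) :
    Gset C 0 N K = ⋃ n : ℕ,
      if n ≤ K then Gset C 0 x n ∩ Gset (fun i => C (n + i)) x N (K - n) else ∅ := by
  classical
  ext ω
  simp only [mem_iUnion]
  constructor
  · rintro ⟨hK, hlt, hnn⟩
    have hKS : K ∈ {m : ℕ | x ≤ walk C 0 m ω} := le_trans hxN hK
    set n := sInf {m : ℕ | x ≤ walk C 0 m ω} with hn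
    have hnK : n ≤ K := Nat.sInf_le hKS
    have hmem : x ≤ walk C 0 n ω := Nat.sInf_mem ⟨K, hKS⟩
    have hmin : ∀ m < n, walk C 0 m ω < x := fun m hm =>
      lt_of_not_ge (Nat.notMem_of_lt_sInf hm)
    have hwn : walk C 0 n ω = x := walk_first_hit C hx0 ω hmem hmin
    have hws : ∀ j, walk (fun i => C (n + i)) x j ω = walk C 0 (n + j) ω := fun j => by
      rw [← hwn]; exact walk_shift C 0 n j ω
    refine ⟨n, ?_⟩
    rw [if_pos hnK]
    refine ⟨⟨hmem, hmin, fun m hm => hnn m (le_trans hm hnK)⟩, ?_, ?_, ?_⟩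
    · rw [hws]
      have h : n + (K - n) = K := by omega
      rw [h]; exact hK
    · intro j hj
      rw [hws]; exact hlt (n + j) (by omega)
    · intro j hj
      rw [hws]; exact hnn (n + j) (by omega)
  · rintro ⟨n, hω⟩
    by_cases h : n ≤ K
    · rw [if_pos h] at hω
      obtain ⟨⟨ha1, ha2, ha3⟩, hb1, hb2, hb3⟩ := hω
      have hwn : walk C 0 n ω = x := walk_first_hit C hx0 ω ha1 ha2
      have hws : ∀ j, walk (fun i => C (n + i)) x j ω = walk C 0 (n + j) ω := fun j => by
        rw [← hwn]; exact walk_shift C 0 n j ω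
      refine ⟨?_, ?_, ?_⟩
      · have hK : n + (K - n) = K := by omega
        rw [← hK, ← hws]; exact hb1
      · intro m hm
        rcases Nat.lt_or_ge m n with hmn | hmn
        · exact lt_of_lt_of_le (ha2 m hmn) hxN
        · have hm' : m - n < K - n := by omega
          have := hb2 (m - n) hm'
          rw [hws] at this
          have he : n + (m - n) = m := by omega
          rwa [he] at this
      · intro m hm
        rcases le_or_gt m n with hmn | hmn
        · exact ha3 m hmn
        · have hm' : m - n ≤ K - n := by omega
          have := hb3 (m - n) hm'
          rw [hws] at this
          have he : n + (m - n) = m := by omega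
          rwa [he] at this
    · rw [if_neg h] at hω
      exact absurd hω (notMem_empty ω)

lemma Gset_decomp_disjoint (C : ℕ → Ω → ℕ) {x : ℤ} (hx0 : 0 ≤ x) (N : ℤ) (K : ℕ) :
    Pairwise (Function.onFun Disjoint fun n : ℕ =>
      if n ≤ K then Gset C 0 x n ∩ Gset (fun i => C (n + i)) x N (K - n) else ∅) := by
  classical
  intro a b hab
  simp only [Function.onFun]
  by_cases haK : a ≤ K
  · by_cases hbK : b ≤ K
    · rw [if_pos haK, if_pos hbK]
      refine Set.disjoint_left.mpr fun ω hωa hωb => ?_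
      obtain ⟨⟨ha1, ha2, -⟩, -⟩ := hωa
      obtain ⟨⟨hb1, hb2, -⟩, -⟩ := hωb
      rcases Nat.lt_or_ge a b with h | h
      · exact absurd ha1 (not_le.mpr (hb2 a h))
      · have h' : b < a := lt_of_le_of_ne h (fun he => hab he.symm)
        exact absurd hb1 (not_le.mpr (ha2 b h'))
    · rw [if_neg hbK]; exact Set.disjoint_empty _
  · rw [if_neg haK]; exact Set.empty_disjoint _



lemma prob_Gset_shift (P : Measure Ω) (C : ℕ → Ω → ℕ) (p : ℕ → ℝ)
    (hC : ∀ i, Measurable (C i))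
    (hindep : ProbabilityTheory.iIndepFun C P)
    (hdist : ∀ i k, P {ω | C i ω = k} = ENNReal.ofReal (p k))
    (x N : ℤ) (t n : ℕ) :
    P (Gset (fun i => C (t + i)) x N n) = P (Gset C x N n) := by
  rw [Gset_shift_eq_preimage, cyl_prob P C p hC hindep hdist t n]
  rw [Gset_eq_preimage C x N n, cyl_prob P C p hC hindep hdist 0 n]

lemma prob_Gset_decomp (P : Measure Ω) (C : ℕ → Ω → ℕ) (p : ℕ → ℝ)
    (hC : ∀ i, Measurable (C i))
    (hindep : ProbabilityTheory.iIndepFun C P)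
    (hdist : ∀ i k, P {ω | C i ω = k} = ENNReal.ofReal (p k))
    {x N : ℤ} (hx0 : 0 ≤ x) (hxN : x ≤ N) (K : ℕ) :
    P (Gset C 0 N K) = ∑' n : ℕ,
      if n ≤ K then P (Gset C 0 x n) * P (Gset C x N (K - n)) else 0 := by
  classical
  rw [Gset_decomp C hx0 hxN K,
    measure_iUnion (Gset_decomp_disjoint C hx0 N K) ?_]
  · refine tsum_congr fun n => ?_
    by_cases h : n ≤ K
    · rw [if_pos h, if_pos h, Gset_eq_preimage, Gset_shift_eq_preimage,
        block_indep P C p hC hindep hdist n (K - n),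
        ← Gset_eq_preimage, cyl_prob P C p hC hindep hdist n (K - n),
        ← cyl_prob P C p hC hindep hdist 0 (K - n), ← Gset_eq_preimage]
    · rw [if_neg h, if_neg h, measure_empty]
  · intro n
    by_cases h : n ≤ K
    · rw [if_pos h]
      exact (measurableSet_Gset C hC 0 x n).inter
        (measurableSet_Gset _ (fun i => hC (n + i)) x N (K - n))
    · rw [if_neg h]; exact MeasurableSet.empty

/-- Transform generating function in `ℝ≥0∞`. -/
def LL (P : Measure Ω) (C : ℕ → Ω → ℕ) (vE : ℝ≥0∞) (x N : ℤ) : ℝ≥0∞ :=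
  ∑' n : ℕ, vE ^ n * P (Gset C x N n)

lemma LL_mul (P : Measure Ω) (C : ℕ → Ω → ℕ) (p : ℕ → ℝ)
    (hC : ∀ i, Measurable (C i))
    (hindep : ProbabilityTheory.iIndepFun C P)
    (hdist : ∀ i k, P {ω | C i ω = k} = ENNReal.ofReal (p k))
    (vE : ℝ≥0∞) {x N : ℤ} (hx0 : 0 ≤ x) (hxN : x ≤ N) :
    LL P C vE 0 N = LL P C vE 0 x * LL P C vE x N := by
  classical
  have h1 : LL P C vE 0 N = ∑' K : ℕ, ∑' n : ℕ,
      if n ≤ K then vE ^ K * (P (Gset C 0 x n) * P (Gset C x N (K - n))) else 0 := by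
    refine tsum_congr fun K => ?_
    rw [show (∑' n : ℕ, if n ≤ K then vE ^ K * (P (Gset C 0 x n) * P (Gset C x N (K - n))) else 0)
        = ∑' n : ℕ, vE ^ K * (if n ≤ K then P (Gset C 0 x n) * P (Gset C x N (K - n)) else 0) from
      tsum_congr fun n => by split_ifs <;> simp]
    rw [ENNReal.tsum_mul_left, ← prob_Gset_decomp P C p hC hindep hdist hx0 hxN K]
  rw [h1, ENNReal.tsum_comm]
  have h2 : ∀ n : ℕ, (∑' K : ℕ,
      if n ≤ K then vE ^ K * (P (Gset C 0 x n) * P (Gset C x N (K - n))) else 0)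
      = (vE ^ n * P (Gset C 0 x n)) * LL P C vE x N := by
    intro n
    have hinj : Function.Injective fun m : ℕ => n + m := add_right_injective n
    rw [← Function.Injective.tsum_eq hinj (f := fun K : ℕ =>
        if n ≤ K then vE ^ K * (P (Gset C 0 x n) * P (Gset C x N (K - n))) else 0) ?_]
    · have : ∀ m : ℕ,
          (if n ≤ n + m then vE ^ (n + m) * (P (Gset C 0 x n) * P (Gset C x N (n + m - n))) else 0)
          = (vE ^ n * P (Gset C 0 x n)) * (vE ^ m * P (Gset C x N m)) := by
        intro m
        rw [if_pos (by omega), show n + m - n = m by omega, pow_add]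
        ring
      rw [tsum_congr this, ENNReal.tsum_mul_left]
      rfl
    · intro K hK
      rcases le_or_gt n K with h | h
      · exact ⟨K - n, show n + (K - n) = K by omega⟩
      · exact absurd (if_neg (not_le.mpr h)) hK
  rw [tsum_congr h2, ENNReal.tsum_mul_right]
  rfl



lemma LL_le_one (P : Measure Ω) [IsProbabilityMeasure P] (C : ℕ → Ω → ℕ)
    (hC : ∀ i, Measurable (C i)) {vE : ℝ≥0∞} (hvE : vE ≤ 1) (x N : ℤ) :
    LL P C vE x N ≤ 1 := by
  calc (∑' n : ℕ, vE ^ n * P (Gset C x N n))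
      ≤ ∑' n : ℕ, P (Gset C x N n) :=
        ENNReal.tsum_le_tsum fun n =>
          mul_le_of_le_one_left zero_le (pow_le_one' hvE n)
    _ = P (⋃ n, Gset C x N n) :=
        (measure_iUnion (Gset_pairwise_disjoint C x N)
          (fun n => measurableSet_Gset C hC x N n)).symm
    _ ≤ 1 := prob_le_one

lemma LL_ne_top (P : Measure Ω) [IsProbabilityMeasure P] (C : ℕ → Ω → ℕ)
    (hC : ∀ i, Measurable (C i)) {vE : ℝ≥0∞} (hvE : vE ≤ 1) (x N : ℤ) :
    LL P C vE x N ≠ ⊤ :=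
  (lt_of_le_of_lt (LL_le_one P C hC hvE x N) ENNReal.one_lt_top).ne

lemma Eind_eq_LL (P : Measure Ω) [IsProbabilityMeasure P] (C : ℕ → Ω → ℕ)
    (hC : ∀ i, Measurable (C i)) (x N : ℤ) {v : ℝ} (hv : v ∈ Set.Ioc (0 : ℝ) 1) :
    Eind P {ω | tauPlus C x N ω < tauMinus C x (-1) ω}
      (fun ω => v ^ (tauPlus C x N ω).toNat)
      = (LL P C (ENNReal.ofReal v) x N).toReal := by
  classical
  set vE := ENNReal.ofReal v with hvE
  have hvE1 : vE ≤ 1 := ENNReal.ofReal_le_one.mpr hv.2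
  set A := {ω | tauPlus C x N ω < tauMinus C x (-1) ω} with hA
  set g : Ω → ℝ≥0∞ := fun ω => ∑' n : ℕ, (Gset C x N n).indicator (fun _ => vE ^ n) ω with hg
  have hpt : ∀ ω, A.indicator (fun ω => v ^ (tauPlus C x N ω).toNat) ω = (g ω).toReal
      ∧ g ω < ⊤ := by
    intro ω
    by_cases hω : ω ∈ A
    · obtain ⟨n, hn⟩ := mem_iUnion.mp (by rw [hA, event_eq_iUnion C x N] at hω; exact hω)
      have htau := mem_Gset_iff.mp hn
      have hgω : g ω = vE ^ n := by
        rw [hg]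
        show (∑' k : ℕ, (Gset C x N k).indicator (fun _ => vE ^ k) ω) = vE ^ n
        rw [tsum_eq_single n ?_]
        · exact indicator_of_mem hn _
        · intro b hb
          refine indicator_of_notMem (fun hmem => hb ?_) _
          have h1 := (mem_Gset_iff.mp hmem).1
          exact_mod_cast h1.symm.trans htau.1
      refine ⟨?_, ?_⟩
      · rw [indicator_of_mem hω, hgω, htau.1]
        rw [show ((n : ℕ∞)).toNat = n from rfl]
        rw [hvE, ← ENNReal.ofReal_pow hv.1.le,
          ENNReal.toReal_ofReal (pow_nonneg hv.1.le n)]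
      · rw [hgω]
        exact lt_of_le_of_lt (pow_le_one' hvE1 n) ENNReal.one_lt_top
    · have hgω : g ω = 0 := by
        rw [hg]
        have : ∀ n : ℕ, (Gset C x N n).indicator (fun _ => vE ^ n) ω = 0 := by
          intro n
          refine indicator_of_notMem (fun hmem => hω ?_) _
          rw [hA, event_eq_iUnion C x N]
          exact mem_iUnion.mpr ⟨n, hmem⟩
        show (∑' n : ℕ, (Gset C x N n).indicator (fun _ => vE ^ n) ω) = 0
        rw [tsum_congr this, tsum_zero]
      refine ⟨?_, by rw [hgω]; exact ENNReal.zero_lt_top⟩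
      rw [indicator_of_notMem hω, hgω, ENNReal.toReal_zero]
  have hgmeas : Measurable g :=
    Measurable.ennreal_tsum fun n =>
      measurable_const.indicator (measurableSet_Gset C hC x N n)
  calc Eind P A (fun ω => v ^ (tauPlus C x N ω).toNat)
      = ∫ ω, (g ω).toReal ∂P :=
        integral_congr_ae (ae_of_all _ fun ω => (hpt ω).1)
    _ = (∫⁻ ω, g ω ∂P).toReal :=
        integral_toReal hgmeas.aemeasurable (ae_of_all _ fun ω => (hpt ω).2)
    _ = (LL P C vE x N).toReal := by
        rw [hg]
        rw [lintegral_tsum fun n =>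
          (measurable_const.indicator (measurableSet_Gset C hC x N n)).aemeasurable]
        congr 1
        refine tsum_congr fun n => ?_
        rw [lintegral_indicator_const (measurableSet_Gset C hC x N n)]

lemma LL_pos (P : Measure Ω) (C : ℕ → Ω → ℕ) (p : ℕ → ℝ)
    (hindep : ProbabilityTheory.iIndepFun C P)
    (hdist : ∀ i k, P {ω | C i ω = k} = ENNReal.ofReal (p k))
    (hp0 : 0 < p 0) {vE : ℝ≥0∞} (hvE : 0 < vE) (y : ℕ) :
    0 < LL P C vE 0 (y : ℤ) := by
  have hsub : restr C 0 y ⁻¹' {fun _ => 0} ⊆ Gset C 0 (y : ℤ) y := by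
    intro ω hω
    have hzero : ∀ i : Fin y, C (0 + (i : ℕ)) ω = 0 := fun i =>
      congrFun (mem_singleton_iff.mp hω) i
    have hwalk : ∀ m ≤ y, walk C 0 m ω = m := by
      intro m hm
      have hsum : ∑ i ∈ Finset.range m, ((C i ω : ℤ)) = 0 := by
        refine Finset.sum_eq_zero fun i hi => ?_
        have hi' : i < y := lt_of_lt_of_le (Finset.mem_range.mp hi) hm
        have := hzero ⟨i, hi'⟩
        rw [Nat.zero_add] at this
        rw [this]; rfl
      rw [walk, hsum]; ring
    refine ⟨by rw [hwalk y le_rfl], fun m hm => ?_, fun m hm => ?_⟩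
    · rw [hwalk m (le_of_lt hm)]; exact_mod_cast hm
    · rw [hwalk m hm]; exact Int.natCast_nonneg m
  have hatom : P (restr C 0 y ⁻¹' {fun _ => 0}) = ENNReal.ofReal (p 0) ^ y := by
    rw [atom_prob P C p hindep hdist 0 y (fun _ => 0), atomP]
    simp [Finset.prod_const]
  have hGpos : 0 < P (Gset C 0 (y : ℤ) y) := by
    refine lt_of_lt_of_le ?_ (measure_mono hsub)
    rw [hatom]
    exact ENNReal.pow_pos (ENNReal.ofReal_pos.mpr hp0) y
  calc (0 : ℝ≥0∞) < vE ^ y * P (Gset C 0 (y : ℤ) y) :=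
        ENNReal.mul_pos (ENNReal.pow_pos hvE y).ne' hGpos.ne'
    _ ≤ LL P C vE 0 (y : ℤ) := ENNReal.le_tsum y

lemma Gset_eq_empty (C : ℕ → Ω → ℕ) {x : ℤ} (hx : x < 0) (N : ℤ) (n : ℕ) :
    Gset C x N n = ∅ := by
  ext ω
  simp only [Gset, mem_setOf_eq, mem_empty_iff_false, iff_false, not_and]
  intro _ _ h3
  have := h3 0 (Nat.zero_le n)
  rw [walk_zero] at this
  omega


/-- Smooth two-sided exit: `E_x[v^(τ_N^+); τ_N^+ < τ_(-1)^-] = W_v(x)/W_v(N)`, and the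
expectation entering the definition of `W_v` is strictly positive. -/
theorem two_sided_exit_upwards
    (P : Measure Ω) [IsProbabilityMeasure P]
    (C : ℕ → Ω → ℕ) (p : ℕ → ℝ)
    (hC : ∀ i, Measurable (C i))
    (hindep : ProbabilityTheory.iIndepFun C P)
    (hdist : ∀ i k, P {ω | C i ω = k} = ENNReal.ofReal (p k))
    (hnn : ∀ k, 0 ≤ p k) (hsum : ∑' k, p k = 1) (hp0 : 0 < p 0) :
    ∀ v : ℝ, v ∈ Set.Ioc (0 : ℝ) 1 →
      (∀ (N : ℕ) (x : ℤ), x ≤ (N : ℤ) →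
        Eind P {ω | tauPlus C x N ω < tauMinus C x (-1) ω}
            (fun ω => v ^ (tauPlus C x N ω).toNat)
          = W P C v (p 0) x / W P C v (p 0) N) ∧
      (∀ y : ℕ, 0 < Eind P {ω | tauPlus C 0 y ω < tauMinus C 0 (-1) ω}
            (fun ω => v ^ (tauPlus C 0 y ω).toNat)) := by
  intro v hv
  have hvE0 : 0 < ENNReal.ofReal v := ENNReal.ofReal_pos.mpr hv.1
  have hvE1 : ENNReal.ofReal v ≤ 1 := ENNReal.ofReal_le_one.mpr hv.2
  set vE := ENNReal.ofReal v with hvE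
  have hpos : ∀ y : ℕ, 0 < Eind P {ω | tauPlus C 0 y ω < tauMinus C 0 (-1) ω}
      (fun ω => v ^ (tauPlus C 0 y ω).toNat) := by
    intro y
    rw [Eind_eq_LL P C hC 0 (y : ℤ) hv]
    exact ENNReal.toReal_pos (LL_pos P C p hindep hdist hp0 hvE0 y).ne'
      (LL_ne_top P C hC hvE1 0 y)
  refine ⟨?_, hpos⟩
  intro N x hxN
  rw [Eind_eq_LL P C hC x (N : ℤ) hv]
  rcases lt_or_ge x 0 with hx | hx
  · have hLL : LL P C vE x N = 0 := by
      rw [LL]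
      simp [Gset_eq_empty C hx]
    rw [hLL, ENNReal.toReal_zero, W, if_neg (not_le.mpr hx), zero_div]
  · have hp0' : p 0 ≠ 0 := ne_of_gt hp0
    have hW : ∀ y : ℤ, 0 ≤ y → W P C v (p 0) y = 1 / (p 0 * (LL P C vE 0 y).toReal) := by
      intro y hy
      rw [W, if_pos hy, Eind_eq_LL P C hC 0 y hv]
    have hA : 0 < (LL P C vE 0 x).toReal := by
      have h1 := LL_pos P C p hindep hdist hp0 hvE0 x.toNat
      rw [Int.toNat_of_nonneg hx] at h1
      exact ENNReal.toReal_pos h1.ne' (LL_ne_top P C hC hvE1 0 x)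
    have hB : 0 < (LL P C vE 0 (N : ℤ)).toReal :=
      ENNReal.toReal_pos (LL_pos P C p hindep hdist hp0 hvE0 N).ne'
        (LL_ne_top P C hC hvE1 0 (N : ℤ))
    have hmul : LL P C vE 0 (N : ℤ) = LL P C vE 0 x * LL P C vE x (N : ℤ) :=
      LL_mul P C p hC hindep hdist vE hx hxN
    have hBr : (LL P C vE 0 (N : ℤ)).toReal
        = (LL P C vE 0 x).toReal * (LL P C vE x (N : ℤ)).toReal := by
      rw [hmul, ENNReal.toReal_mul]
    have ht : (LL P C vE x (N : ℤ)).toReal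
        = (LL P C vE 0 (N : ℤ)).toReal / (LL P C vE 0 x).toReal := by
      rw [hBr, mul_comm, mul_div_assoc, div_self hA.ne', mul_one]
    rw [hW x hx, hW (N : ℤ) (Int.natCast_nonneg N), ht]
    field_simp


end RW
end
end

section
/- For every v ∈ (0,1] and every x ∈ ℕ₀, the scale function satisfies the harmonic recursion W_v(x) = v · Σ_{k=0}^{x+1} p_k · W_v(x+1−k). -/
open MeasureTheory Set
open scoped ENNReal

noncomputable section

namespace RW

variable {Ω : Type*} [MeasurableSpace Ω]

def wSeq (x : ℤ) (c : ℕ → ℕ) (m : ℕ) : ℤ := x + m - ∑ i ∈ Finset.range m, (c i : ℤ)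
lemma wSeq_zero (x : ℤ) (c : ℕ → ℕ) : wSeq x c 0 = x := by simp [wSeq]
lemma wSeq_succ_shift (x : ℤ) (c : ℕ → ℕ) (m : ℕ) :
    wSeq x c (m + 1) = wSeq (x + 1 - c 0) (fun i => c (i + 1)) m := by
  simp only [wSeq, Finset.sum_range_succ']; push_cast; ring
lemma wSeq_congr (x : ℤ) {c c' : ℕ → ℕ} (m : ℕ) (h : ∀ i < m, c i = c' i) :
    wSeq x c m = wSeq x c' m := by
  simp only [wSeq]; congr 1
  exact Finset.sum_congr rfl fun i hi => by rw [h i (Finset.mem_range.mp hi)]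
lemma wSeq_add (x : ℤ) (c : ℕ → ℕ) (m r : ℕ) :
    wSeq x c (m + r) = wSeq (wSeq x c m) (fun i => c (m + i)) r := by
  simp only [wSeq]
  rw [Finset.sum_range_add]; push_cast; ring
lemma wSeq_succ_le (x : ℤ) (c : ℕ → ℕ) (m : ℕ) :
    wSeq x c (m + 1) ≤ wSeq x c m + 1 := by
  simp only [wSeq, Finset.sum_range_succ]
  have : (0:ℤ) ≤ (c m : ℤ) := Int.natCast_nonneg _
  push_cast; omega

/-- the path `c` (from `x`) stays in `[0, y)` before time `n` and is `≥ y` at time `n`. -/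
def good (x y : ℤ) (n : ℕ) (c : ℕ → ℕ) : Prop :=
  y ≤ wSeq x c n ∧ ∀ m < n, 0 ≤ wSeq x c m ∧ wSeq x c m < y

lemma good_congr {x y : ℤ} {n : ℕ} {c c' : ℕ → ℕ} (h : ∀ i < n, c i = c' i) :
    good x y n c ↔ good x y n c' := by
  unfold good
  have hw : ∀ m ≤ n, wSeq x c m = wSeq x c' m := fun m hm =>
    wSeq_congr x m fun i hi => h i (lt_of_lt_of_le hi hm)
  constructor <;> rintro ⟨h1, h2⟩ <;> constructor
  · rw [← hw n le_rfl]; exact h1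
  · intro m hm; rw [← hw m hm.le]; exact h2 m hm
  · rw [hw n le_rfl]; exact h1
  · intro m hm; rw [hw m hm.le]; exact h2 m hm

lemma good_zero_iff (x y : ℤ) (c : ℕ → ℕ) : good x y 0 c ↔ y ≤ x := by
  simp [good, wSeq_zero]

lemma good_succ_iff (x y : ℤ) (n : ℕ) (c : ℕ → ℕ) :
    good x y (n + 1) c ↔ (0 ≤ x ∧ x < y) ∧ good (x + 1 - c 0) y n (fun i => c (i + 1)) := by
  unfold good
  constructor
  · rintro ⟨h1, h2⟩
    have h0 := h2 0 (Nat.succ_pos n)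
    rw [wSeq_zero] at h0
    refine ⟨h0, ?_, fun m hm => ?_⟩
    · rw [← wSeq_succ_shift]; exact h1
    · rw [← wSeq_succ_shift]; exact h2 (m + 1) (by omega)
  · rintro ⟨h0, h1, h2⟩
    refine ⟨by rw [wSeq_succ_shift]; exact h1, fun m hm => ?_⟩
    match m with
    | 0 => rw [wSeq_zero]; exact h0
    | m + 1 => rw [wSeq_succ_shift]; exact h2 m (by omega)

/-- uniqueness of the passage time -/
lemma good_uniq {x y : ℤ} {n n' : ℕ} {c : ℕ → ℕ} (h : good x y n c) (h' : good x y n' c) :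
    n = n' := by
  by_contra hne
  rcases Nat.lt_or_ge n n' with hlt | hge
  · exact absurd h.1 (not_le.mpr (h'.2 n hlt).2)
  · exact absurd h'.1 (not_le.mpr (h.2 n' (by omega)).2)

/-- at the first passage time the walk is exactly at `y` (skip-free) -/
lemma good_exact {x y : ℤ} {n : ℕ} {c : ℕ → ℕ} (hxy : x ≤ y) (h : good x y n c) :
    wSeq x c n = y := by
  match n with
  | 0 =>
    rw [good_zero_iff] at h
    rw [wSeq_zero]
    omega
  | n + 1 =>
    have h1 := (h.2 n (Nat.lt_succ_self n)).2
    have h2 := wSeq_succ_le x c n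
    have h3 := h.1
    omega

/-- decomposition of a `good` path at the first passage through `y` -/
lemma good_split {x y z : ℤ} (hxy : x ≤ y) (hyz : y ≤ z) (n : ℕ) (c : ℕ → ℕ) :
    good x z n c ↔ ∃ m, m ≤ n ∧ good x y m c ∧ good y z (n - m) (fun i => c (m + i)) := by
  constructor
  · intro h
    have hex : ∃ j, y ≤ wSeq x c j := ⟨n, le_trans hyz h.1⟩
    set m := Nat.find hex with hm
    have hspec : y ≤ wSeq x c m := Nat.find_spec hex
    have hmin : ∀ j < m, ¬ y ≤ wSeq x c j := fun j hj => Nat.find_min hex hj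
    have hmn : m ≤ n := Nat.find_min' hex (le_trans hyz h.1)
    have hgood1 : good x y m c :=
      ⟨hspec, fun j hj => ⟨(h.2 j (lt_of_lt_of_le hj hmn)).1, not_le.mp (hmin j hj)⟩⟩
    have hexact : wSeq x c m = y := good_exact hxy hgood1
    refine ⟨m, hmn, hgood1, ?_, fun r hr => ?_⟩
    · have : wSeq y (fun i => c (m + i)) (n - m) = wSeq x c n := by
        rw [← hexact, ← wSeq_add]; congr 1; omega
      rw [this]; exact h.1
    · have : wSeq y (fun i => c (m + i)) r = wSeq x c (m + r) := by
        rw [← hexact, ← wSeq_add]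
      rw [this]; exact h.2 (m + r) (by omega)
  · rintro ⟨m, hmn, h1, h2⟩
    have hexact : wSeq x c m = y := good_exact hxy h1
    have hkey : ∀ r, wSeq y (fun i => c (m + i)) r = wSeq x c (m + r) := fun r => by
      rw [← hexact, ← wSeq_add]
    constructor
    · have := h2.1; rw [hkey (n - m)] at this
      have hnm : m + (n - m) = n := by omega
      rwa [hnm] at this
    · intro j hj
      rcases Nat.lt_or_ge j m with hjm | hjm
      · have := h1.2 j hjm
        exact ⟨this.1, lt_of_lt_of_le this.2 hyz⟩
      · have hr : j - m < n - m := by omega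
        have := h2.2 (j - m) hr
        rw [hkey (j - m)] at this
        have : 0 ≤ wSeq x c j ∧ wSeq x c j < z := by
          have hj' : m + (j - m) = j := by omega
          rwa [hj'] at this
        exact this


/-- extend a tuple by zeros -/
def extt (n : ℕ) (t : Fin n → ℕ) : ℕ → ℕ := fun i => if h : i < n then t ⟨i, h⟩ else 0

lemma extt_lt (n : ℕ) (t : Fin n → ℕ) (i : ℕ) (h : i < n) : extt n t i = t ⟨i, h⟩ := dif_pos h

open Classical in
/-- indicator of a proposition, in `ℝ≥0∞` -/
noncomputable def indE (Q : Prop) : ℝ≥0∞ := if Q then 1 else 0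

lemma indE_pos {Q : Prop} (h : Q) : indE Q = 1 := by simp [indE, h]

lemma indE_neg {Q : Prop} (h : ¬ Q) : indE Q = 0 := by simp [indE, h]

lemma indE_congr {Q R : Prop} (h : Q ↔ R) : indE Q = indE R := by
  by_cases hq : Q
  · rw [indE_pos hq, indE_pos (h.mp hq)]
  · rw [indE_neg hq, indE_neg (fun hr => hq (h.mpr hr))]

lemma indE_and (A B : Prop) : indE (A ∧ B) = indE A * indE B := by
  by_cases ha : A
  · by_cases hb : B
    · rw [indE_pos (⟨ha, hb⟩), indE_pos ha, indE_pos hb, one_mul]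
    · rw [indE_neg (fun h => hb h.2), indE_neg hb, mul_zero]
  · rw [indE_neg (fun h => ha h.1), indE_neg ha, zero_mul]


lemma measurable_wSeqC (C : ℕ → Ω → ℕ) (hC : ∀ i, Measurable (C i)) (x : ℤ) (o m : ℕ) :
    Measurable fun ω => wSeq x (fun i => C (o + i) ω) m := by
  have h : Measurable fun ω => ∑ i ∈ Finset.range m, ((C (o + i) ω : ℤ)) :=
    Finset.measurable_sum _ fun i _ => measurable_from_top.comp (hC (o + i))
  exact measurable_const.sub h

lemma measurableSet_good (C : ℕ → Ω → ℕ) (hC : ∀ i, Measurable (C i)) (x y : ℤ) (o n : ℕ) :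
    MeasurableSet {ω | good x y n (fun i => C (o + i) ω)} := by
  have : {ω | good x y n (fun i => C (o + i) ω)}
      = ((fun ω => wSeq x (fun i => C (o + i) ω) n) ⁻¹' {z | y ≤ z}) ∩
        ⋂ m ∈ {m : ℕ | m < n}, ((fun ω => wSeq x (fun i => C (o + i) ω) m) ⁻¹'
          {z | 0 ≤ z ∧ z < y}) := by
    ext ω
    simp only [good, Set.mem_inter_iff, Set.mem_preimage, Set.mem_setOf_eq, Set.mem_iInter]
  rw [this]
  refine MeasurableSet.inter (measurable_wSeqC C hC x o n trivial) ?_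
  exact MeasurableSet.biInter (Set.to_countable _)
    fun m _ => measurable_wSeqC C hC x o m trivial

lemma cylinder_meas (P : Measure Ω) (C : ℕ → Ω → ℕ) (p : ℕ → ℝ)
    (hindep : ProbabilityTheory.iIndepFun C P)
    (hdist : ∀ i k, P {ω | C i ω = k} = ENNReal.ofReal (p k))
    (o n : ℕ) (e : ℕ → ℕ) :
    P (⋂ i ∈ Finset.range n, {ω | C (o + i) ω = e i})
      = ∏ i ∈ Finset.range n, ENNReal.ofReal (p (e i)) := by
  classical
  set S : Finset ℕ := (Finset.range n).map ⟨fun i => o + i, fun a b h => by simpa using h⟩ with hS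
  set s : ℕ → Set Ω := fun j => {ω | C j ω = e (j - o)} with hs
  have hmeas : ∀ j ∈ S, MeasurableSet[MeasurableSpace.comap (C j) ⊤] (s j) := by
    intro j _
    refine ⟨{e (j - o)}, trivial, ?_⟩
    ext ω; simp [hs]
  have hset : (⋂ j ∈ S, s j) = ⋂ i ∈ Finset.range n, {ω | C (o + i) ω = e i} := by
    ext ω
    simp only [Set.mem_iInter, hS, Finset.mem_map, Finset.mem_range,
      Function.Embedding.coeFn_mk, hs, Set.mem_setOf_eq]
    constructor
    · intro h i hi
      have := h (o + i) ⟨i, hi, rfl⟩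
      simpa using this
    · rintro h j ⟨i, hi, rfl⟩
      show C (o + i) ω = e (o + i - o)
      simpa using h i hi
  rw [← hset, hindep.meas_biInter hmeas]
  rw [hS, Finset.prod_map]
  refine Finset.prod_congr rfl fun i _ => ?_
  simp only [Function.Embedding.coeFn_mk, hs]
  show P {ω | C (o + i) ω = e (o + i - o)} = ENNReal.ofReal (p (e i))
  rw [Nat.add_sub_cancel_left, hdist]

/-- Atomic decomposition: the probability of an event depending on `n` consecutive
claims `C o, ..., C (o+n-1)` is a sum over tuples of products. -/
lemma meas_good_event (P : Measure Ω) (C : ℕ → Ω → ℕ) (p : ℕ → ℝ)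
    (hC : ∀ i, Measurable (C i))
    (hindep : ProbabilityTheory.iIndepFun C P)
    (hdist : ∀ i k, P {ω | C i ω = k} = ENNReal.ofReal (p k))
    (o n : ℕ) (g : (ℕ → ℕ) → Prop)
    (hg : ∀ c c', (∀ i < n, c i = c' i) → (g c ↔ g c')) :
    P {ω | g (fun i => C (o + i) ω)}
      = ∑' t : Fin n → ℕ,
          indE (g (extt n t)) * ∏ i : Fin n, ENNReal.ofReal (p (t i)) := by
  classical
  set D : (Fin n → ℕ) → Set Ω := fun t =>
    {ω | g (extt n t) ∧ ∀ i ∈ Finset.range n, C (o + i) ω = extt n t i} with hD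
  have hDcases : ∀ t, D t = if g (extt n t)
      then (⋂ i ∈ Finset.range n, {ω | C (o + i) ω = extt n t i}) else ∅ := by
    intro t
    by_cases hgt : g (extt n t)
    · rw [if_pos hgt]
      ext ω
      simp only [hD, Set.mem_setOf_eq, Set.mem_iInter, hgt, true_and]
    · rw [if_neg hgt]
      ext ω
      simp only [hD, Set.mem_setOf_eq, hgt, false_and, Set.mem_empty_iff_false]
  have hDmeas : ∀ t, MeasurableSet (D t) := by
    intro t
    rw [hDcases t]
    by_cases hgt : g (extt n t)
    · rw [if_pos hgt]
      exact MeasurableSet.biInter (Set.to_countable _)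
        fun i _ => (hC (o + i)) (measurableSet_singleton _)
    · rw [if_neg hgt]; exact MeasurableSet.empty
  have hunion : {ω | g (fun i => C (o + i) ω)} = ⋃ t, D t := by
    ext ω
    simp only [Set.mem_setOf_eq, Set.mem_iUnion, hD]
    constructor
    · intro h
      refine ⟨fun i => C (o + i.val) ω, ?_, ?_⟩
      · refine (hg _ _ ?_).mp h
        intro i hi
        rw [extt_lt n _ i hi]
      · intro i hi
        rw [extt_lt n _ i (Finset.mem_range.mp hi)]
    · rintro ⟨t, hgt, ht⟩
      refine (hg _ _ ?_).mp hgt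
      intro i hi
      exact (ht i (Finset.mem_range.mpr hi)).symm
  have hdisj : Pairwise (Function.onFun Disjoint D) := by
    intro t t' htt'
    rw [Function.onFun, Set.disjoint_left]
    rintro ω ⟨_, ht⟩ ⟨_, ht'⟩
    apply htt'
    funext i
    have h1 := ht i.val (Finset.mem_range.mpr i.isLt)
    have h2 := ht' i.val (Finset.mem_range.mpr i.isLt)
    rw [extt_lt n t i.val i.isLt] at h1
    rw [extt_lt n t' i.val i.isLt] at h2
    simp only [Fin.eta] at h1 h2
    rw [← h1, ← h2]
  rw [hunion, measure_iUnion hdisj hDmeas]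
  congr 1
  funext t
  rw [hDcases t]
  by_cases hgt : g (extt n t)
  · rw [if_pos hgt, indE_pos hgt, one_mul]
    rw [cylinder_meas P C p hindep hdist o n (extt n t)]
    rw [← Fin.prod_univ_eq_prod_range (fun i => ENNReal.ofReal (p (extt n t i))) n]
    refine Finset.prod_congr rfl fun i _ => ?_
    rw [extt_lt n t i.val i.isLt]
  · rw [if_neg hgt, indE_neg hgt, measure_empty, zero_mul]


section PA

variable (P : Measure Ω) [IsProbabilityMeasure P] (C : ℕ → Ω → ℕ) (p : ℕ → ℝ)

/-- probability that the walk from `x` stays in `[0, y)` up to time `n` and is `≥ y`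
at time `n`. -/
def PA (x y : ℤ) (n : ℕ) : ℝ≥0∞ := P {ω | good x y n (fun i => C i ω)}

variable {P C p}

variable (hC : ∀ i, Measurable (C i))
  (hindep : ProbabilityTheory.iIndepFun C P)
  (hdist : ∀ i k, P {ω | C i ω = k} = ENNReal.ofReal (p k))

include hC hindep hdist in
lemma PA_eq_tsum (x y : ℤ) (n : ℕ) :
    PA P C x y n = ∑' t : Fin n → ℕ,
      indE (good x y n (extt n t)) * ∏ i : Fin n, ENNReal.ofReal (p (t i)) := by
  have h0 : {ω | good x y n (fun i => C i ω)} = {ω | good x y n (fun i => C (0 + i) ω)} := by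
    ext ω
    exact good_congr fun i _ => by rw [Nat.zero_add]
  rw [PA, h0, meas_good_event P C p hC hindep hdist 0 n (good x y n)
    (fun c c' h => good_congr h)]

include hC hindep hdist in
lemma PA_shift (x y : ℤ) (n : ℕ) (o : ℕ) :
    P {ω | good x y n (fun i => C (o + i) ω)} = PA P C x y n := by
  rw [meas_good_event P C p hC hindep hdist o n (good x y n) (fun c c' h => good_congr h),
    PA_eq_tsum hC hindep hdist]

lemma PA_zero (x y : ℤ) : PA P C x y 0 = indE (y ≤ x) := by
  by_cases h : y ≤ x
  · have : {ω | good x y 0 (fun i => C i ω)} = Set.univ := by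
      ext ω; simp [good_zero_iff, h]
    rw [PA, this, measure_univ, indE_pos h]
  · have : {ω | good x y 0 (fun i => C i ω)} = ∅ := by
      ext ω; simp [good_zero_iff, h]
    rw [PA, this, measure_empty, indE_neg h]

lemma PA_succ_neg (x y : ℤ) (n : ℕ) (h : ¬ (0 ≤ x ∧ x < y)) : PA P C x y (n + 1) = 0 := by
  have : {ω | good x y (n + 1) (fun i => C i ω)} = ∅ := by
    ext ω
    simp only [Set.mem_setOf_eq, Set.mem_empty_iff_false, iff_false]
    intro hg
    exact h ((good_succ_iff x y n _).mp hg).1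
  rw [PA, this, measure_empty]

include hC hindep hdist in
lemma PA_succ (x y : ℤ) (n : ℕ) (h0 : 0 ≤ x) (hxy : x < y) :
    PA P C x y (n + 1) = ∑' k : ℕ, ENNReal.ofReal (p k) * PA P C (x + 1 - k) y n := by
  classical
  set Ek : ℕ → Set Ω := fun k =>
    {ω | C 0 ω = k} ∩ {ω | good (x + 1 - k) y n (fun i => C (1 + i) ω)} with hEk
  have hev : {ω | good x y (n + 1) (fun i => C i ω)} = ⋃ k : ℕ, Ek k := by
    ext ω
    have hfe : (fun i => C (i + 1) ω) = (fun i => C (1 + i) ω) :=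
      funext fun i => by rw [Nat.add_comm]
    simp only [Set.mem_setOf_eq, Set.mem_iUnion, hEk, Set.mem_inter_iff]
    rw [good_succ_iff]
    constructor
    · rintro ⟨-, hg⟩
      rw [hfe] at hg
      exact ⟨C 0 ω, rfl, hg⟩
    · rintro ⟨k, hk, hg⟩
      rw [← hfe] at hg
      rw [hk]
      exact ⟨⟨h0, hxy⟩, hg⟩
  have hmeas : ∀ k, MeasurableSet (Ek k) := fun k =>
    ((hC 0) (measurableSet_singleton k)).inter (measurableSet_good C hC _ y 1 n)
  have hdisj : Pairwise (Function.onFun Disjoint Ek) := by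
    intro k k' hkk'
    rw [Function.onFun, Set.disjoint_left]
    rintro ω ⟨h1, -⟩ ⟨h2, -⟩
    exact hkk' (h1 ▸ h2)
  rw [PA, hev, measure_iUnion hdisj hmeas]
  congr 1
  funext k
  -- compute P (Ek k)
  have hset : Ek k = {ω | (fun c : ℕ → ℕ => c 0 = k ∧
      good (x + 1 - k) y n (fun i => c (1 + i))) (fun i => C (0 + i) ω)} := by
    ext ω
    simp only [hEk, Set.mem_inter_iff, Set.mem_setOf_eq, Nat.zero_add]
  have hgdep : ∀ c c' : ℕ → ℕ, (∀ i < n + 1, c i = c' i) →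
      ((c 0 = k ∧ good (x + 1 - k) y n (fun i => c (1 + i)))
        ↔ (c' 0 = k ∧ good (x + 1 - k) y n (fun i => c' (1 + i)))) := by
    intro c c' h
    rw [h 0 (Nat.succ_pos n)]
    have : good (x + 1 - k) y n (fun i => c (1 + i))
        ↔ good (x + 1 - k) y n (fun i => c' (1 + i)) :=
      good_congr fun i hi => h (1 + i) (by omega)
    tauto
  rw [hset, meas_good_event P C p hC hindep hdist 0 (n + 1) _ hgdep]
  rw [← Equiv.tsum_eq (Fin.consEquiv (fun _ : Fin (n + 1) => ℕ))]
  rw [ENNReal.tsum_prod']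
  have hterm : ∀ (a : ℕ) (s : Fin n → ℕ),
      indE ((extt (n + 1) (Fin.consEquiv (fun _ : Fin (n + 1) => ℕ) (a, s)) 0 = k) ∧
          good (x + 1 - k) y n
            (fun i => extt (n + 1) (Fin.consEquiv (fun _ : Fin (n + 1) => ℕ) (a, s)) (1 + i)))
        * ∏ i : Fin (n + 1),
            ENNReal.ofReal (p ((Fin.consEquiv (fun _ : Fin (n + 1) => ℕ) (a, s)) i))
      = indE (a = k) * (indE (good (x + 1 - k) y n (extt n s)) *
          (ENNReal.ofReal (p a) * ∏ i : Fin n, ENNReal.ofReal (p (s i)))) := by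
    intro a s
    have hcons : (Fin.consEquiv (fun _ : Fin (n + 1) => ℕ)) (a, s)
        = Fin.cons (α := fun _ => ℕ) a s := rfl
    rw [hcons]
    have hmk0 : (⟨0, Nat.succ_pos n⟩ : Fin (n + 1)) = 0 := by
      apply Fin.ext; simp
    have h1 : extt (n + 1) (Fin.cons (α := fun _ => ℕ) a s) 0 = a := by
      rw [extt_lt (n + 1) _ 0 (Nat.succ_pos n), hmk0, Fin.cons_zero]
    have h2 : good (x + 1 - k) y n
          (fun i => extt (n + 1) (Fin.cons (α := fun _ => ℕ) a s) (1 + i))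
        ↔ good (x + 1 - k) y n (extt n s) := by
      apply good_congr
      intro i hi
      rw [extt_lt (n + 1) _ (1 + i) (by omega), extt_lt n s i hi]
      have : (⟨1 + i, by omega⟩ : Fin (n + 1)) = Fin.succ ⟨i, hi⟩ := by
        apply Fin.ext
        simp [Nat.add_comm]
      rw [this, Fin.cons_succ]
    have h3 : (∏ i : Fin (n + 1), ENNReal.ofReal (p (Fin.cons (α := fun _ => ℕ) a s i)))
        = ENNReal.ofReal (p a) * ∏ i : Fin n, ENNReal.ofReal (p (s i)) := by
      rw [Fin.prod_univ_succ (fun i : Fin (n + 1) =>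
        ENNReal.ofReal (p (Fin.cons (α := fun _ => ℕ) a s i)))]
      simp only [Fin.cons_zero, Fin.cons_succ]
    rw [h1, indE_and, indE_congr h2, h3, mul_assoc]
  calc ∑' (a : ℕ) (s : Fin n → ℕ), indE _ * ∏ i : Fin (n + 1), ENNReal.ofReal _
      = ∑' (a : ℕ) (s : Fin n → ℕ), indE (a = k) *
          (indE (good (x + 1 - k) y n (extt n s)) *
            (ENNReal.ofReal (p a) * ∏ i : Fin n, ENNReal.ofReal (p (s i)))) := by
        congr 1; funext a; congr 1; funext s; exact hterm a s
    _ = ENNReal.ofReal (p k) * PA P C (x + 1 - k) y n := by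
        rw [tsum_eq_single k (fun a ha => by simp [indE_neg ha])]
        have hkk : indE (k = k) = 1 := indE_pos rfl
        have htrue : indE True = 1 := indE_pos trivial
        simp only [hkk, htrue, one_mul]
        rw [PA_eq_tsum hC hindep hdist, ← ENNReal.tsum_mul_left]
        exact tsum_congr fun s => by ring

end PA


section Split

variable {P : Measure Ω} [IsProbabilityMeasure P] {C : ℕ → Ω → ℕ} {p : ℕ → ℝ}
variable (hC : ∀ i, Measurable (C i))
  (hindep : ProbabilityTheory.iIndepFun C P)
  (hdist : ∀ i k, P {ω | C i ω = k} = ENNReal.ofReal (p k))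

include hC hindep hdist in
/-- Splitting at the first passage through the intermediate level `y`. -/
lemma PA_split {y z : ℤ} (hyz : y ≤ z) (n : ℕ) :
    ∀ x : ℤ, x ≤ y →
      PA P C x z n = ∑ m ∈ Finset.range (n + 1), PA P C x y m * PA P C y z (n - m) := by
  induction n with
  | zero =>
    intro x hxy
    rw [Finset.sum_range_one, Nat.sub_zero, PA_zero, PA_zero, PA_zero, ← indE_and]
    exact indE_congr (by constructor <;> intro h <;> omega)
  | succ n IH =>
    intro x hxy
    rcases eq_or_lt_of_le hxy with heq | hlt
    · subst heq
      rw [Finset.sum_eq_single_of_mem 0 (Finset.mem_range.mpr (Nat.succ_pos _)) ?side]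
      · rw [PA_zero, indE_pos le_rfl, one_mul, Nat.sub_zero]
      case side =>
        intro m hm hm0
        obtain ⟨m', rfl⟩ := Nat.exists_eq_succ_of_ne_zero hm0
        rw [PA_succ_neg _ _ _ (by simp), zero_mul]
    · by_cases h0 : 0 ≤ x
      · have hxz : x < z := lt_of_lt_of_le hlt hyz
        rw [PA_succ hC hindep hdist x z n h0 hxz]
        have hIH : ∀ k : ℕ, PA P C (x + 1 - k) z n
            = ∑ m ∈ Finset.range (n + 1), PA P C (x + 1 - k) y m * PA P C y z (n - m) :=
          fun k => IH (x + 1 - k) (by have := Int.natCast_nonneg k; omega)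
        calc ∑' k : ℕ, ENNReal.ofReal (p k) * PA P C (x + 1 - k) z n
            = ∑' k : ℕ, ∑ m ∈ Finset.range (n + 1),
                ENNReal.ofReal (p k) * (PA P C (x + 1 - k) y m * PA P C y z (n - m)) := by
              refine tsum_congr fun k => ?_
              rw [hIH k, Finset.mul_sum]
          _ = ∑ m ∈ Finset.range (n + 1), ∑' k : ℕ,
                ENNReal.ofReal (p k) * (PA P C (x + 1 - k) y m * PA P C y z (n - m)) := by
              exact Summable.tsum_finsetSum fun m _ => ENNReal.summable
          _ = ∑ m ∈ Finset.range (n + 1),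
                (∑' k : ℕ, ENNReal.ofReal (p k) * PA P C (x + 1 - k) y m)
                  * PA P C y z (n - m) := by
              refine Finset.sum_congr rfl fun m _ => ?_
              rw [← ENNReal.tsum_mul_right]
              exact tsum_congr fun k => by ring
          _ = ∑ m ∈ Finset.range (n + 1), PA P C x y (m + 1) * PA P C y z (n - m) := by
              refine Finset.sum_congr rfl fun m _ => ?_
              rw [PA_succ hC hindep hdist x y m h0 hlt]
          _ = ∑ m ∈ Finset.range (n + 1 + 1), PA P C x y m * PA P C y z (n + 1 - m) := by
              rw [Finset.sum_range_succ' (fun m => PA P C x y m * PA P C y z (n + 1 - m))]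
              rw [PA_zero, indE_neg (not_le.mpr hlt), zero_mul, add_zero]
              exact Finset.sum_congr rfl fun m _ => by rw [Nat.succ_sub_succ]
      · rw [PA_succ_neg _ _ _ (fun h => h0 h.1)]
        symm
        refine Finset.sum_eq_zero fun m _ => ?_
        match m with
        | 0 => rw [PA_zero, indE_neg (not_le.mpr hlt), zero_mul]
        | m + 1 => rw [PA_succ_neg _ _ _ (fun h => h0 h.1), zero_mul]

end Split

section G

variable (P : Measure Ω) [IsProbabilityMeasure P] (C : ℕ → Ω → ℕ)

/-- generating function (in time) of the two-sided exit probabilities -/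
def Gv (v : ℝ) (x y : ℤ) : ℝ≥0∞ := ∑' n : ℕ, (ENNReal.ofReal v) ^ n * PA P C x y n

variable {P C}
variable {p : ℕ → ℝ} (hC : ∀ i, Measurable (C i))
  (hindep : ProbabilityTheory.iIndepFun C P)
  (hdist : ∀ i k, P {ω | C i ω = k} = ENNReal.ofReal (p k))

include hC hindep hdist in
lemma Gv_rec {v : ℝ} {x y : ℤ} (h0 : 0 ≤ x) (hxy : x < y) :
    Gv P C v x y = ENNReal.ofReal v * ∑' k : ℕ,
      ENNReal.ofReal (p k) * Gv P C v (x + 1 - k) y := by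
  have hsplit : Gv P C v x y = (ENNReal.ofReal v) ^ 0 * PA P C x y 0
      + ∑' n : ℕ, (ENNReal.ofReal v) ^ (n + 1) * PA P C x y (n + 1) :=
    tsum_eq_zero_add' ENNReal.summable
  rw [hsplit, pow_zero, one_mul, PA_zero, indE_neg (not_le.mpr hxy), zero_add]
  calc ∑' n : ℕ, (ENNReal.ofReal v) ^ (n + 1) * PA P C x y (n + 1)
      = ∑' (n : ℕ) (k : ℕ), ENNReal.ofReal v *
          (ENNReal.ofReal (p k) * ((ENNReal.ofReal v) ^ n * PA P C (x + 1 - k) y n)) := by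
        refine tsum_congr fun n => ?_
        rw [PA_succ hC hindep hdist x y n h0 hxy, ← ENNReal.tsum_mul_left]
        exact tsum_congr fun k => by ring
    _ = ∑' (k : ℕ) (n : ℕ), ENNReal.ofReal v *
          (ENNReal.ofReal (p k) * ((ENNReal.ofReal v) ^ n * PA P C (x + 1 - k) y n)) :=
        ENNReal.tsum_comm
    _ = ENNReal.ofReal v * ∑' k : ℕ,
          ENNReal.ofReal (p k) * Gv P C v (x + 1 - k) y := by
        rw [← ENNReal.tsum_mul_left]
        refine tsum_congr fun k => ?_
        rw [ENNReal.tsum_mul_left, ENNReal.tsum_mul_left]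
        rfl

include hC hindep hdist in
lemma Gv_mul {v : ℝ} {x y z : ℤ} (hxy : x ≤ y) (hyz : y ≤ z) :
    Gv P C v x z = Gv P C v x y * Gv P C v y z := by
  classical
  set V := ENNReal.ofReal v with hV
  have hrhs : Gv P C v x y * Gv P C v y z
      = ∑' q : ℕ × ℕ, (V ^ q.1 * PA P C x y q.1) * (V ^ q.2 * PA P C y z q.2) := by
    rw [Gv, Gv, ENNReal.tsum_prod', ← ENNReal.tsum_mul_right]
    refine tsum_congr fun m => ?_
    rw [← ENNReal.tsum_mul_left]
  rw [hrhs, ← Equiv.tsum_eq (Finset.HasAntidiagonal.sigmaAntidiagonalEquivProd (A := ℕ))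
    (fun q : ℕ × ℕ => (V ^ q.1 * PA P C x y q.1) * (V ^ q.2 * PA P C y z q.2))]
  rw [ENNReal.tsum_sigma']
  rw [Gv]
  refine tsum_congr fun n => ?_
  have h0 : ∑' (b : (Finset.HasAntidiagonal.antidiagonal n : Finset (ℕ × ℕ))),
        (V ^ ((Finset.HasAntidiagonal.sigmaAntidiagonalEquivProd (A := ℕ)) ⟨n, b⟩).1
            * PA P C x y ((Finset.HasAntidiagonal.sigmaAntidiagonalEquivProd (A := ℕ)) ⟨n, b⟩).1) *
          (V ^ ((Finset.HasAntidiagonal.sigmaAntidiagonalEquivProd (A := ℕ)) ⟨n, b⟩).2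
            * PA P C y z ((Finset.HasAntidiagonal.sigmaAntidiagonalEquivProd (A := ℕ)) ⟨n, b⟩).2)
      = ∑' (b : (Finset.HasAntidiagonal.antidiagonal n : Finset (ℕ × ℕ))),
        (V ^ (b : ℕ × ℕ).1 * PA P C x y (b : ℕ × ℕ).1) *
          (V ^ (b : ℕ × ℕ).2 * PA P C y z (b : ℕ × ℕ).2) := tsum_congr fun b => rfl
  have h1 : ∑' (b : (Finset.HasAntidiagonal.antidiagonal n : Finset (ℕ × ℕ))),
        (V ^ (b : ℕ × ℕ).1 * PA P C x y (b : ℕ × ℕ).1) *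
          (V ^ (b : ℕ × ℕ).2 * PA P C y z (b : ℕ × ℕ).2)
      = ∑ b ∈ Finset.HasAntidiagonal.antidiagonal n,
          (V ^ b.1 * PA P C x y b.1) * (V ^ b.2 * PA P C y z b.2) :=
    Finset.tsum_subtype (Finset.HasAntidiagonal.antidiagonal n)
      (fun b : ℕ × ℕ => (V ^ b.1 * PA P C x y b.1) * (V ^ b.2 * PA P C y z b.2))
  rw [h0, h1, Finset.Nat.sum_antidiagonal_eq_sum_range_succ_mk]
  rw [PA_split hC hindep hdist hyz n x hxy, Finset.mul_sum]
  refine Finset.sum_congr rfl fun m hm => ?_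
  have hmn : m ≤ n := Nat.lt_succ_iff.mp (Finset.mem_range.mp hm)
  have hpow : V ^ m * V ^ (n - m) = V ^ n := by
    rw [← pow_add]
    congr 1
    omega
  show ENNReal.ofReal v ^ n * (PA P C x y m * PA P C y z (n - m))
      = V ^ m * PA P C x y m * (V ^ (n - m) * PA P C y z (n - m))
  rw [← hpow]
  ring

include hC in
lemma PA_disjoint_tsum_le_one (x y : ℤ) : ∑' n : ℕ, PA P C x y n ≤ 1 := by
  have hmeas : ∀ n, MeasurableSet {ω | good x y n (fun i => C i ω)} := by
    intro n
    have : {ω | good x y n (fun i => C i ω)} = {ω | good x y n (fun i => C (0 + i) ω)} := by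
      ext ω
      exact good_congr fun i _ => by rw [Nat.zero_add]
    rw [this]
    exact measurableSet_good C hC x y 0 n
  have hdisj : Pairwise (Function.onFun Disjoint
      (fun n => {ω | good x y n (fun i => C i ω)})) := by
    intro n n' hnn'
    rw [Function.onFun, Set.disjoint_left]
    intro ω h1 h2
    exact hnn' (good_uniq h1 h2)
  calc ∑' n : ℕ, PA P C x y n = P (⋃ n, {ω | good x y n (fun i => C i ω)}) :=
        (measure_iUnion hdisj hmeas).symm
    _ ≤ 1 := prob_le_one

include hC in
lemma Gv_le_one {v : ℝ} (hv1 : v ≤ 1) (x y : ℤ) : Gv P C v x y ≤ 1 := by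
  have h : ∀ n : ℕ, (ENNReal.ofReal v) ^ n * PA P C x y n ≤ PA P C x y n := by
    intro n
    calc (ENNReal.ofReal v) ^ n * PA P C x y n
        ≤ 1 * PA P C x y n :=
          mul_le_mul_left (pow_le_one' (ENNReal.ofReal_le_one.mpr hv1) n) _
      _ = PA P C x y n := one_mul _
  exact le_trans (ENNReal.tsum_le_tsum h) (PA_disjoint_tsum_le_one hC x y)

include hindep hdist in
lemma Gv_pos {v : ℝ} (hv0 : 0 < v) (hp0 : 0 < p 0)
    {y : ℤ} (hy : 0 ≤ y) : Gv P C v 0 y ≠ 0 := by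
  set n := y.toNat with hn
  have hPA : ENNReal.ofReal (p 0) ^ n ≤ PA P C 0 y n := by
    have hsub : (⋂ i ∈ Finset.range n, {ω | C (0 + i) ω = (fun _ => 0) i})
        ⊆ {ω | good 0 y n (fun i => C i ω)} := by
      intro ω hω
      simp only [Set.mem_iInter, Set.mem_setOf_eq, Nat.zero_add] at hω
      have hw : ∀ m ≤ n, wSeq 0 (fun i => C i ω) m = m := by
        intro m hm
        have : ∑ i ∈ Finset.range m, ((C i ω : ℤ)) = 0 :=
          Finset.sum_eq_zero fun i hi => by
            rw [hω i (Finset.mem_range.mpr (lt_of_lt_of_le (Finset.mem_range.mp hi) hm))]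
            simp
        simp [wSeq, this]
      constructor
      · rw [hw n le_rfl]
        omega
      · intro m hm
        rw [hw m hm.le]
        constructor
        · positivity
        · have : (m : ℤ) < n := by exact_mod_cast hm
          omega
    calc ENNReal.ofReal (p 0) ^ n
        = P (⋂ i ∈ Finset.range n, {ω | C (0 + i) ω = (fun _ : ℕ => 0) i}) := by
          rw [cylinder_meas P C p hindep hdist 0 n (fun _ => 0)]
          rw [Finset.prod_const, Finset.card_range]
      _ ≤ PA P C 0 y n := measure_mono hsub
  have hle : ENNReal.ofReal v ^ n * ENNReal.ofReal (p 0) ^ n ≤ Gv P C v 0 y :=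
    le_trans (mul_le_mul_right hPA _) (ENNReal.le_tsum n)
  intro h
  rw [h, le_zero_iff, mul_eq_zero] at hle
  rcases hle with h' | h'
  · exact (pow_ne_zero n (by simpa using (ENNReal.ofReal_pos.mpr hv0).ne')) h'
  · exact (pow_ne_zero n (by simpa using (ENNReal.ofReal_pos.mpr hp0).ne')) h'

lemma Gv_neg {v : ℝ} {x y : ℤ} (hx : x < 0) (hy : 0 ≤ y) : Gv P C v x y = 0 := by
  rw [Gv]
  rw [ENNReal.tsum_eq_zero]
  intro n
  match n with
  | 0 => rw [PA_zero, indE_neg (by omega), mul_zero]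
  | n + 1 => rw [PA_succ_neg _ _ _ (fun h => absurd h.1 (not_le.mpr hx)), mul_zero]

end G


section Link

variable (C : ℕ → Ω → ℕ)

lemma walk_eq_wSeq (x : ℤ) (n : ℕ) (ω : Ω) :
    walk C x n ω = wSeq x (fun i => C i ω) n := rfl

variable {C}

/-- value of `sInf` of an image of a set of naturals in `ℕ∞` at its least element -/
lemma sInf_image_coe {s : Set ℕ} {n : ℕ} (hn : n ∈ s) (hmin : ∀ m < n, m ∉ s) :
    sInf ((fun n : ℕ => (n : ℕ∞)) '' s) = (n : ℕ∞) := by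
  apply le_antisymm
  · exact sInf_le ⟨n, hn, rfl⟩
  · refine le_sInf ?_
    rintro b ⟨m, hm, rfl⟩
    have : n ≤ m := by
      by_contra hc
      exact hmin m (by omega) hm
    show (n : ℕ∞) ≤ (m : ℕ∞)
    exact_mod_cast this

lemma tau_of_good {v : ℝ} {y : ℤ} (hy : 0 ≤ y) {n : ℕ} {ω : Ω}
    (h : good 0 y n (fun i => C i ω)) :
    tauPlus C 0 y ω = (n : ℕ∞) ∧ ((n : ℕ∞) < tauMinus C 0 (-1) ω) := by
  have hmem : n ∈ {m : ℕ | y ≤ walk C 0 m ω} := by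
    rw [Set.mem_setOf_eq, walk_eq_wSeq]
    exact h.1
  have hmin : ∀ m < n, m ∉ {m : ℕ | y ≤ walk C 0 m ω} := by
    intro m hm hmem'
    rw [Set.mem_setOf_eq, walk_eq_wSeq] at hmem'
    exact absurd hmem' (not_le.mpr (h.2 m hm).2)
  constructor
  · rw [tauPlus, sInf_image_coe hmem hmin]
  · have hlb : ∀ b ∈ (fun n : ℕ => (n : ℕ∞)) '' {m : ℕ | walk C 0 m ω ≤ -1},
        (n : ℕ∞) + 1 ≤ b := by
      rintro b ⟨m, hm, rfl⟩
      rw [Set.mem_setOf_eq, walk_eq_wSeq] at hm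
      have hnm : n < m := by
        by_contra hc
        push_neg at hc
        rcases Nat.lt_or_ge m n with hlt | hge
        · have := (h.2 m hlt).1
          omega
        · have hmn : m = n := le_antisymm hc hge
          subst hmn
          have := h.1
          omega
      calc (n : ℕ∞) + 1 = ((n + 1 : ℕ) : ℕ∞) := by push_cast; rfl
        _ ≤ (m : ℕ∞) := by exact_mod_cast hnm
    have h1 : (n : ℕ∞) + 1 ≤ tauMinus C 0 (-1) ω := le_sInf hlb
    have hcast : ((n + 1 : ℕ) : ℕ∞) = (n : ℕ∞) + 1 := by push_cast; rfl
    have h2 : (n : ℕ∞) < ((n + 1 : ℕ) : ℕ∞) := by exact_mod_cast Nat.lt_succ_self n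
    rw [← hcast] at h1
    exact lt_of_lt_of_le h2 h1

lemma good_of_tau {y : ℤ} (hy : 0 ≤ y) {ω : Ω}
    (h : tauPlus C 0 y ω < tauMinus C 0 (-1) ω) :
    ∃ n, good 0 y n (fun i => C i ω) := by
  classical
  have hne : {m : ℕ | y ≤ walk C 0 m ω}.Nonempty := by
    by_contra hc
    rw [Set.not_nonempty_iff_eq_empty] at hc
    rw [tauPlus, hc, Set.image_empty, sInf_empty] at h
    exact not_top_lt h
  set n := Nat.find hne with hn
  have hspec : y ≤ walk C 0 n ω := Nat.find_spec hne
  have hmin : ∀ m < n, m ∉ {m : ℕ | y ≤ walk C 0 m ω} := fun m hm => Nat.find_min hne hm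
  have htau : tauPlus C 0 y ω = (n : ℕ∞) := by
    rw [tauPlus, sInf_image_coe (Nat.find_spec hne) hmin]
  refine ⟨n, by rw [← walk_eq_wSeq]; exact hspec, fun m hm => ?_⟩
  constructor
  · rw [← walk_eq_wSeq]
    by_contra hc
    push_neg at hc
    have hmem : m ∈ {m : ℕ | walk C 0 m ω ≤ -1} := by
      rw [Set.mem_setOf_eq]; omega
    have h2 : tauMinus C 0 (-1) ω ≤ (m : ℕ∞) :=
      sInf_le ⟨m, hmem, rfl⟩
    rw [htau] at h
    have h3 : (m : ℕ∞) < (n : ℕ∞) := by exact_mod_cast hm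
    exact absurd (lt_trans (lt_of_le_of_lt h2 h3) h) (lt_irrefl _)
  · rw [← walk_eq_wSeq]
    exact not_le.mp (Nat.find_min hne hm)

variable {P : Measure Ω} [IsProbabilityMeasure P] {p : ℕ → ℝ}

/-- The expectation in the definition of `W` equals the generating function `Gv`. -/
lemma Eind_eq_Gv (hC : ∀ i, Measurable (C i))
    (hindep : ProbabilityTheory.iIndepFun C P)
    (hdist : ∀ i k, P {ω | C i ω = k} = ENNReal.ofReal (p k))
    {v : ℝ} (hv0 : 0 < v) (hv1 : v ≤ 1) {y : ℤ} (hy : 0 ≤ y) :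
    Eind P {ω | tauPlus C 0 y ω < tauMinus C 0 (-1) ω}
        (fun ω => v ^ (tauPlus C 0 y ω).toNat)
      = (Gv P C v 0 y).toReal := by
  classical
  set A : ℕ → Set Ω := fun n => {ω | good 0 y n (fun i => C i ω)} with hA
  have hAmeas : ∀ n, MeasurableSet (A n) := by
    intro n
    have : A n = {ω | good 0 y n (fun i => C (0 + i) ω)} := by
      ext ω
      exact good_congr fun i _ => by rw [Nat.zero_add]
    rw [this]
    exact measurableSet_good C hC 0 y 0 n
  -- pointwise identity
  have hpt : Set.indicator {ω | tauPlus C 0 y ω < tauMinus C 0 (-1) ω}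
        (fun ω => v ^ (tauPlus C 0 y ω).toNat)
      = fun ω => ∑' n : ℕ, (A n).indicator (fun _ => v ^ n) ω := by
    funext ω
    by_cases hω : ∃ n, ω ∈ A n
    · obtain ⟨n0, hn0⟩ := hω
      have htau := tau_of_good (v := v) hy hn0
      have huniq : ∀ n, n ≠ n0 → (A n).indicator (fun _ => v ^ n) ω = 0 := by
        intro n hn
        rw [Set.indicator_of_notMem]
        intro hmem
        exact hn (good_uniq hmem hn0)
      rw [tsum_eq_single n0 huniq, Set.indicator_of_mem hn0,
        Set.indicator_of_mem]
      · rw [htau.1]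
        simp
      · rw [Set.mem_setOf_eq, htau.1]
        exact htau.2
    · push_neg at hω
      have h1 : ω ∉ {ω | tauPlus C 0 y ω < tauMinus C 0 (-1) ω} := by
        intro hmem
        obtain ⟨n, hn⟩ := good_of_tau hy hmem
        exact hω n hn
      rw [Set.indicator_of_notMem h1]
      have hz : ∀ n : ℕ, (A n).indicator (fun _ => v ^ n) ω = 0 :=
        fun n => Set.indicator_of_notMem (hω n) _
      rw [tsum_congr hz, tsum_zero]
  have hsm : ∀ n : ℕ, AEStronglyMeasurable ((A n).indicator (fun _ => v ^ n)) P :=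
    fun n => (stronglyMeasurable_const.indicator (hAmeas n)).aestronglyMeasurable
  have hlin : ∀ n : ℕ, (∫⁻ ω, ‖(A n).indicator (fun _ => v ^ n) ω‖₊ ∂P)
      = ENNReal.ofReal (v ^ n) * P (A n) := by
    intro n
    have hfun : (fun ω => (‖(A n).indicator (fun _ => v ^ n) ω‖₊ : ℝ≥0∞))
        = (A n).indicator (fun _ => ENNReal.ofReal (v ^ n)) := by
      funext ω
      by_cases hω : ω ∈ A n
      · rw [Set.indicator_of_mem hω, Set.indicator_of_mem hω]
        exact Real.enorm_eq_ofReal (by positivity)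
      · rw [Set.indicator_of_notMem hω, Set.indicator_of_notMem hω]
        simp
    rw [hfun, lintegral_indicator_const (hAmeas n)]
  have hsum_ne : (∑' n : ℕ, ∫⁻ ω, ‖(A n).indicator (fun _ => v ^ n) ω‖₊ ∂P) ≠ ⊤ := by
    have hle : ∀ n : ℕ, (∫⁻ ω, ‖(A n).indicator (fun _ => v ^ n) ω‖₊ ∂P)
        ≤ PA P C 0 y n := by
      intro n
      rw [hlin n]
      calc ENNReal.ofReal (v ^ n) * P (A n) ≤ 1 * P (A n) :=
            mul_le_mul_left (ENNReal.ofReal_le_one.mpr (pow_le_one₀ hv0.le hv1)) _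
        _ = PA P C 0 y n := by rw [one_mul]; rfl
    exact ne_top_of_le_ne_top ENNReal.one_ne_top
      (le_trans (ENNReal.tsum_le_tsum hle) (PA_disjoint_tsum_le_one hC 0 y))
  rw [Eind, hpt, MeasureTheory.integral_tsum hsm hsum_ne]
  have hint : ∀ n : ℕ, (∫ ω, (A n).indicator (fun _ => v ^ n) ω ∂P)
      = (P (A n)).toReal * v ^ n := by
    intro n
    rw [MeasureTheory.integral_indicator_const (v ^ n) (hAmeas n), smul_eq_mul]
    rfl
  have hG : (Gv P C v 0 y).toReal = ∑' n : ℕ, (P (A n)).toReal * v ^ n := by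
    rw [Gv, ENNReal.tsum_toReal_eq (f := fun n : ℕ => (ENNReal.ofReal v) ^ n * PA P C 0 y n)
      (fun n => ENNReal.mul_ne_top (ENNReal.pow_ne_top ENNReal.ofReal_ne_top)
        (measure_ne_top P _))]
    refine tsum_congr fun n => ?_
    rw [ENNReal.toReal_mul, ENNReal.toReal_pow, ENNReal.toReal_ofReal hv0.le, mul_comm]
    rfl
  rw [hG]
  exact tsum_congr hint

end Link

/-- The harmonic recursion `W_v(x) = v · Σ_(k=0)^(x+1) p_k W_v(x+1-k)` for `x ∈ ℕ₀`. -/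
theorem W_harmonic_recursion
    (P : Measure Ω) [IsProbabilityMeasure P]
    (C : ℕ → Ω → ℕ) (p : ℕ → ℝ)
    (hC : ∀ i, Measurable (C i))
    (hindep : ProbabilityTheory.iIndepFun C P)
    (hdist : ∀ i k, P {ω | C i ω = k} = ENNReal.ofReal (p k))
    (hnn : ∀ k, 0 ≤ p k) (hsum : ∑' k, p k = 1) (hp0 : 0 < p 0) :
    ∀ v : ℝ, v ∈ Set.Ioc (0 : ℝ) 1 → ∀ x : ℕ,
      W P C v (p 0) x
        = v * ∑ k ∈ Finset.range (x + 2), p k * W P C v (p 0) ((x : ℤ) + 1 - k) := by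
  rintro v ⟨hv0, hv1⟩ x
  have hx0 : (0 : ℤ) ≤ (x : ℤ) := Int.natCast_nonneg x
  have hW : ∀ z : ℤ, 0 ≤ z →
      W P C v (p 0) z = 1 / (p 0 * (Gv P C v 0 z).toReal) := by
    intro z hz
    rw [W, if_pos hz, Eind_eq_Gv hC hindep hdist hv0 hv1 hz]
  have hGm : ∀ z z' : ℤ, Gv P C v z z' ≠ ⊤ := fun z z' =>
    ne_top_of_le_ne_top ENNReal.one_ne_top (Gv_le_one hC hv1 z z')
  have hgpos : ∀ z : ℤ, 0 ≤ z → 0 < (Gv P C v 0 z).toReal := fun z hz =>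
    ENNReal.toReal_pos (Gv_pos hindep hdist hv0 hp0 hz) (hGm 0 z)
  -- one-step recursion at level x, truncated to a finite sum
  have hrecE : Gv P C v x ((x : ℤ) + 1)
      = ENNReal.ofReal v * ∑ k ∈ Finset.range (x + 2),
          ENNReal.ofReal (p k) * Gv P C v ((x : ℤ) + 1 - k) ((x : ℤ) + 1) := by
    rw [Gv_rec hC hindep hdist hx0 (by omega : (x : ℤ) < (x : ℤ) + 1)]
    congr 1
    refine tsum_eq_sum ?_
    intro k hk
    have hk2 : (x : ℤ) + 1 - k < 0 := by
      have hxk : x + 2 ≤ k := not_lt.mp (fun h => hk (Finset.mem_range.mpr h))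
      have : ((x : ℤ)) + 2 ≤ (k : ℤ) := by exact_mod_cast hxk
      omega
    rw [Gv_neg hk2 (by omega), mul_zero]
  -- splitting identities
  have hsx : Gv P C v 0 ((x : ℤ) + 1) = Gv P C v 0 x * Gv P C v x ((x : ℤ) + 1) :=
    Gv_mul hC hindep hdist hx0 (by omega)
  have hsk : ∀ k ∈ Finset.range (x + 2),
      Gv P C v 0 ((x : ℤ) + 1)
        = Gv P C v 0 ((x : ℤ) + 1 - k) * Gv P C v ((x : ℤ) + 1 - k) ((x : ℤ) + 1) := by
    intro k hk
    have hk1 : (k : ℤ) ≤ (x : ℤ) + 1 := by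
      have := Finset.mem_range.mp hk
      have : (k : ℤ) < (x : ℤ) + 2 := by exact_mod_cast this
      omega
    exact Gv_mul hC hindep hdist (by omega) (by omega)
  have hargnn : ∀ k ∈ Finset.range (x + 2), (0 : ℤ) ≤ (x : ℤ) + 1 - k := by
    intro k hk
    have := Finset.mem_range.mp hk
    have : (k : ℤ) < (x : ℤ) + 2 := by exact_mod_cast this
    omega
  -- real abbreviations
  set gx : ℝ := (Gv P C v 0 x).toReal with hgx
  set gx1 : ℝ := (Gv P C v 0 ((x : ℤ) + 1)).toReal with hgx1def
  set e : ℝ := (Gv P C v x ((x : ℤ) + 1)).toReal with he_def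
  have hgx1 : gx1 = gx * e := by rw [hgx1def, hsx, ENNReal.toReal_mul]
  have he : e = v * ∑ k ∈ Finset.range (x + 2),
      p k * (Gv P C v ((x : ℤ) + 1 - k) ((x : ℤ) + 1)).toReal := by
    rw [he_def, hrecE, ENNReal.toReal_mul, ENNReal.toReal_ofReal hv0.le]
    congr 1
    rw [ENNReal.toReal_sum (fun k _ =>
      ENNReal.mul_ne_top ENNReal.ofReal_ne_top (hGm _ _))]
    exact Finset.sum_congr rfl fun k _ => by
      rw [ENNReal.toReal_mul, ENNReal.toReal_ofReal (hnn k)]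
  have hgx1pos : 0 < gx1 := hgpos _ (by omega)
  have hgxpos : 0 < gx := hgpos _ hx0
  have he0 : e ≠ 0 := by
    intro h
    rw [h, mul_zero] at hgx1
    exact absurd hgx1 (ne_of_gt hgx1pos)
  -- rewrite each W in the sum
  have hrhs : ∀ k ∈ Finset.range (x + 2),
      W P C v (p 0) ((x : ℤ) + 1 - k)
        = (Gv P C v ((x : ℤ) + 1 - k) ((x : ℤ) + 1)).toReal / (p 0 * gx1) := by
    intro k hk
    rw [hW _ (hargnn k hk)]
    have hgkpos : 0 < (Gv P C v 0 ((x : ℤ) + 1 - k)).toReal := hgpos _ (hargnn k hk)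
    have hgk : gx1 = (Gv P C v 0 ((x : ℤ) + 1 - k)).toReal
        * (Gv P C v ((x : ℤ) + 1 - k) ((x : ℤ) + 1)).toReal := by
      rw [hgx1def, hsk k hk, ENNReal.toReal_mul]
    rw [div_eq_div_iff (by positivity) (by positivity)]
    rw [one_mul, hgk]
    ring
  rw [hW x hx0]
  have hsum1 : ∑ k ∈ Finset.range (x + 2), p k * W P C v (p 0) ((x : ℤ) + 1 - k)
      = (∑ k ∈ Finset.range (x + 2),
          p k * (Gv P C v ((x : ℤ) + 1 - k) ((x : ℤ) + 1)).toReal) / (p 0 * gx1) := by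
    rw [Finset.sum_div]
    refine Finset.sum_congr rfl fun k hk => ?_
    rw [hrhs k hk]
    exact (mul_div_assoc _ _ _).symm
  rw [hsum1]
  have hS : ∑ k ∈ Finset.range (x + 2),
      p k * (Gv P C v ((x : ℤ) + 1 - k) ((x : ℤ) + 1)).toReal = e / v := by
    rw [eq_div_iff hv0.ne', he]
    ring
  rw [hS, hgx1, ← hgx]
  field_simp

end RW
end
end

section
/- For every v ∈ (0,1] and every z ∈ (0,φ_v): one has p̃(z) − z/v > 0, the series Σ_{x=0}^∞ z^x W_v(x) converges, and Σ_{x=0}^∞ z^x W_v(x) = 1/(p̃(z) − z/v). -/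
open MeasureTheory Set
open scoped ENNReal

noncomputable section

namespace RW

variable {Ω : Type*} [MeasurableSpace Ω]

def walkL (l : List ℕ) : ℤ := l.length - l.sum

@[simp] lemma walkL_nil : walkL [] = 0 := by simp [walkL]

lemma walkL_cons (k : ℕ) (t : List ℕ) : walkL (k :: t) = 1 - k + walkL t := by
  simp [walkL]; push_cast; ring

lemma walkL_append (a b : List ℕ) : walkL (a ++ b) = walkL a + walkL b := by
  simp [walkL]; push_cast; ring

/-- First-passage paths from `0` to `y`, staying strictly above `-b` before the end. -/
def FP (y : ℕ) (b : ℤ) : Set (List ℕ) :=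
  {l | walkL l = y ∧ ∀ m < l.length, walkL (l.take m) < y ∧ -b < walkL (l.take m)}

def wE (v : ℝ) (p : ℕ → ℝ) (l : List ℕ) : ℝ≥0∞ :=
  (l.map fun k => ENNReal.ofReal (v * p k)).prod

@[simp] lemma wE_nil (v : ℝ) (p : ℕ → ℝ) : wE v p [] = 1 := by simp [wE]

lemma wE_cons (v : ℝ) (p : ℕ → ℝ) (k : ℕ) (t : List ℕ) :
    wE v p (k :: t) = ENNReal.ofReal (v * p k) * wE v p t := by simp [wE]

lemma wE_append (v : ℝ) (p : ℕ → ℝ) (a b : List ℕ) :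
    wE v p (a ++ b) = wE v p a * wE v p b := by simp [wE]

def QE (v : ℝ) (p : ℕ → ℝ) (y : ℕ) (b : ℤ) : ℝ≥0∞ := ∑' l : FP y b, wE v p l

def qE (v : ℝ) (p : ℕ → ℝ) (b : ℤ) : ℝ≥0∞ := QE v p 1 b

lemma FP_zero (b : ℤ) : FP 0 b = {[]} := by
  ext l
  constructor
  · rintro ⟨h1, h2⟩
    cases l with
    | nil => rfl
    | cons k t =>
      exfalso
      have := (h2 0 (by simp)).1
      simp at this
  · rintro rfl
    exact ⟨by simp, by simp⟩

lemma FP_ne_nil {y : ℕ} {b : ℤ} (hy : 1 ≤ y) {l : List ℕ} (hl : l ∈ FP y b) : l ≠ [] := by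
  rintro rfl
  have := hl.1
  simp [walkL] at this
  omega

lemma FP_eq_empty_of_nonpos {y : ℕ} {b : ℤ} (hy : 1 ≤ y) (hb : b ≤ 0) : FP y b = ∅ := by
  ext l
  simp only [Set.mem_empty_iff_false, iff_false]
  intro hl
  have hne := FP_ne_nil hy hl
  have hlen : 0 < l.length := List.length_pos_iff.2 hne
  have := (hl.2 0 hlen).2
  simp at this
  omega

lemma walkL_take_succ_le (l : List ℕ) (m : ℕ) :
    walkL (l.take (m + 1)) ≤ walkL (l.take m) + 1 := by
  by_cases h : m < l.length
  · rw [List.take_succ, List.getElem?_eq_getElem h]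
    simp only [Option.toList_some]
    rw [walkL_append, walkL_cons, walkL_nil]
    omega
  · push_neg at h
    rw [List.take_of_length_le (by omega), List.take_of_length_le h]
    omega

/-- Discrete "intermediate value" : first hitting of a positive level `t` by an
upward skip-free discrete path. -/
lemma exists_first_hit (f : ℕ → ℤ) (hstep : ∀ m, f (m + 1) ≤ f m + 1) (t : ℤ)
    (N : ℕ) (h0 : f 0 < t) (hN : t ≤ f N) :
    ∃ m, 0 < m ∧ m ≤ N ∧ f m = t ∧ ∀ j < m, f j < t := by
  classical
  have hex : ∃ m, t ≤ f m := ⟨N, hN⟩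
  set m := Nat.find hex with hm
  have hmem : t ≤ f m := Nat.find_spec hex
  have hlt : ∀ j < m, f j < t := fun j hj => by
    have := Nat.find_min hex hj
    omega
  have hm0 : 0 < m := by
    rcases Nat.eq_zero_or_pos m with h | h
    · exfalso; rw [h] at hmem; omega
    · exact h
  have hmN : m ≤ N := Nat.find_min' hex hN
  refine ⟨m, hm0, hmN, ?_, hlt⟩
  obtain ⟨m', hm'⟩ : ∃ m', m = m' + 1 := ⟨m - 1, by omega⟩
  have h1 := hstep m'
  have h2 := hlt m' (by omega)
  rw [hm'] at hmem ⊢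
  omega


section CombCore
variable (v : ℝ) (p : ℕ → ℝ)

lemma QE_zero (b : ℤ) : QE v p 0 b = 1 := by
  rw [QE, FP_zero, tsum_singleton]
  simp

lemma FP_append_inj {b : ℤ} {a a' c c' : List ℕ} (ha : a ∈ FP 1 b) (ha' : a' ∈ FP 1 b)
    (h : a ++ c = a' ++ c') : a = a' := by
  have key : ∀ (x x' u u' : List ℕ), x ∈ FP 1 b → x' ∈ FP 1 b →
      x ++ u = x' ++ u' → x.length ≤ x'.length → x = x' := by
    intro x x' u u' hx hx' hh hle
    have htake : x = (x' ++ u').take x.length := by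
      rw [← hh, List.take_left]
    have htake' : (x' ++ u').take x.length = x'.take x.length := by
      rw [List.take_append, Nat.sub_eq_zero_of_le hle]
      simp
    rcases lt_or_eq_of_le hle with hlt | heq
    · exfalso
      have h1 := (hx'.2 x.length hlt).1
      rw [← htake', ← htake] at h1
      rw [hx.1] at h1
      norm_num at h1
    · rw [htake, htake', heq, List.take_length]
  rcases le_total a.length a'.length with hle | hle
  · exact key a a' c c' ha ha' h hle
  · exact (key a' a c' c ha' ha h.symm hle).symm

lemma append_mem_FP {y : ℕ} {b : ℤ} {a c : List ℕ} (ha : a ∈ FP 1 b) (hc : c ∈ FP y (b + 1)) :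
    a ++ c ∈ FP (y + 1) b := by
  constructor
  · rw [walkL_append, ha.1, hc.1]
    push_cast; ring
  · intro m hm
    rw [List.length_append] at hm
    rcases lt_or_ge m a.length with hlt | hle
    · have heq : (a ++ c).take m = a.take m := by
        rw [List.take_append, Nat.sub_eq_zero_of_le hlt.le]
        simp
      rw [heq]
      have h1 := ha.2 m hlt
      constructor
      · have : ((1 : ℕ) : ℤ) = 1 := by norm_num
        push_cast
        omega
      · exact h1.2
    · have heq : (a ++ c).take m = a ++ c.take (m - a.length) := by
        rw [List.take_append, List.take_of_length_le hle]
      rw [heq, walkL_append, ha.1]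
      have hmc : m - a.length < c.length := by omega
      have h1 := hc.2 _ hmc
      constructor
      · push_cast
        omega
      · omega

lemma FP_succ_split {y : ℕ} {b : ℤ} {l : List ℕ} (hl : l ∈ FP (y + 1) b) :
    ∃ a c, a ∈ FP 1 b ∧ c ∈ FP y (b + 1) ∧ l = a ++ c := by
  obtain ⟨m₀, hm0, hmN, hfm, hlt⟩ :=
    exists_first_hit (fun m => walkL (l.take m)) (walkL_take_succ_le l) 1 l.length
      (by simp) (by show (1:ℤ) ≤ walkL (l.take l.length); rw [List.take_length, hl.1]; push_cast; omega)
  refine ⟨l.take m₀, l.drop m₀, ⟨hfm, ?_⟩, ⟨?_, ?_⟩, (List.take_append_drop m₀ l).symm⟩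
  · intro m hm
    rw [List.length_take] at hm
    have hmm : m < m₀ := lt_of_lt_of_le hm (min_le_left _ _)
    have hml : m < l.length := lt_of_lt_of_le hmm hmN
    rw [List.take_take, min_eq_left hmm.le]
    exact ⟨hlt m hmm, (hl.2 m hml).2⟩
  · have h1 : walkL l = walkL (l.take m₀) + walkL (l.drop m₀) := by
      conv_lhs => rw [← List.take_append_drop m₀ l]
      rw [walkL_append]
    rw [hl.1] at h1
    rw [hfm] at h1
    push_cast at h1 ⊢
    omega
  · intro m hm
    rw [List.length_drop] at hm
    have htk : l.take (m₀ + m) = l.take m₀ ++ (l.drop m₀).take m := List.take_add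
    have hw : walkL (l.take (m₀ + m)) = 1 + walkL ((l.drop m₀).take m) := by
      rw [htk, walkL_append, hfm]
    have hml : m₀ + m < l.length := by omega
    have h1 := hl.2 _ hml
    push_cast at h1
    constructor
    · push_cast
      omega
    · omega

lemma QE_succ (y : ℕ) (b : ℤ) : QE v p (y + 1) b = qE v p b * QE v p y (b + 1) := by
  have hbij : Function.Bijective (fun x : (FP 1 b : Set (List ℕ)) × (FP y (b + 1) : Set (List ℕ)) =>
      (⟨x.1.1 ++ x.2.1, append_mem_FP x.1.2 x.2.2⟩ : (FP (y + 1) b : Set (List ℕ)))) := by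
    constructor
    · rintro ⟨⟨a, ha⟩, ⟨c, hc⟩⟩ ⟨⟨a', ha'⟩, ⟨c', hc'⟩⟩ h
      have h' : a ++ c = a' ++ c' := congrArg Subtype.val h
      have haa : a = a' := FP_append_inj ha ha' h'
      subst haa
      have hcc : c = c' := by
        have := List.append_cancel_left h'
        exact this
      subst hcc
      rfl
    · rintro ⟨l, hl⟩
      obtain ⟨a, c, ha, hc, rfl⟩ := FP_succ_split hl
      exact ⟨⟨⟨a, ha⟩, ⟨c, hc⟩⟩, rfl⟩
  have h1 : QE v p (y + 1) b =
      ∑' x : (FP 1 b : Set (List ℕ)) × (FP y (b + 1) : Set (List ℕ)),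
        wE v p (x.1.1 ++ x.2.1) :=
    ((Equiv.ofBijective _ hbij).tsum_eq (fun s : (FP (y + 1) b : Set (List ℕ)) => wE v p s)).symm
  rw [h1]
  have h2 : ∀ x : (FP 1 b : Set (List ℕ)) × (FP y (b + 1) : Set (List ℕ)),
      wE v p (x.1.1 ++ x.2.1) = wE v p x.1.1 * wE v p x.2.1 := fun x => wE_append v p _ _
  rw [tsum_congr h2, Summable.tsum_prod' ENNReal.summable (fun _ => ENNReal.summable)]
  simp_rw [ENNReal.tsum_mul_left, ENNReal.tsum_mul_right]
  rfl

lemma QE_prod (y : ℕ) : ∀ b : ℤ, QE v p y b = ∏ i ∈ Finset.range y, qE v p (b + i) := by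
  induction y with
  | zero => intro b; simp [QE_zero]
  | succ n ih =>
    intro b
    rw [QE_succ, ih (b + 1), Finset.prod_range_succ']
    simp only [Nat.cast_add, Nat.cast_one, Nat.cast_zero, add_zero]
    rw [mul_comm]
    congr 1
    apply Finset.prod_congr rfl
    intro i _
    congr 1
    push_cast
    ring

end CombCore


section HeadTail
variable (v : ℝ) (p : ℕ → ℝ)

lemma cons_mem_FP1 {b : ℤ} (hb : 1 ≤ b) {k : ℕ} {t : List ℕ}
    (ht : t ∈ FP k (b + 1 - k)) : k :: t ∈ FP 1 b := by
  constructor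
  · rw [walkL_cons, ht.1]
    push_cast; ring
  · intro m hm
    cases m with
    | zero => simp; omega
    | succ m' =>
      have hm' : m' < t.length := by simpa using hm
      have htake : (k :: t).take (m' + 1) = k :: t.take m' := rfl
      rw [htake, walkL_cons]
      have h1 := ht.2 m' hm'
      push_cast
      constructor <;> omega

lemma FP1_eq_cons {b : ℤ} {l : List ℕ} (hl : l ∈ FP 1 b) :
    ∃ k t, l = k :: t ∧ t ∈ FP k (b + 1 - k) := by
  cases l with
  | nil =>
    exfalso
    exact FP_ne_nil le_rfl hl rfl
  | cons k t =>
    refine ⟨k, t, rfl, ?_, ?_⟩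
    · have h1 := hl.1
      rw [walkL_cons] at h1
      omega
    · intro m hm
      have hm' : m + 1 < (k :: t).length := by simpa using hm
      have htake : (k :: t).take (m + 1) = k :: t.take m := rfl
      have h1 := hl.2 (m + 1) hm'
      rw [htake, walkL_cons] at h1
      push_cast
      constructor <;> omega

lemma qE_eq_tsum {b : ℤ} (hb : 1 ≤ b) :
    qE v p b = ∑' k : ℕ, ENNReal.ofReal (v * p k) * QE v p k (b + 1 - k) := by
  have hbij : Function.Bijective
      (fun x : (Σ k : ℕ, (FP k (b + 1 - (k : ℤ)) : Set (List ℕ))) =>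
        (⟨x.1 :: x.2.1, cons_mem_FP1 hb x.2.2⟩ : (FP 1 b : Set (List ℕ)))) := by
    constructor
    · rintro ⟨k, t, ht⟩ ⟨k', t', ht'⟩ h
      have h' : k :: t = k' :: t' := congrArg Subtype.val h
      have hk : k = k' := by injection h'
      subst hk
      have htt : t = t' := by injection h'
      subst htt
      rfl
    · rintro ⟨l, hl⟩
      obtain ⟨k, t, rfl, ht⟩ := FP1_eq_cons hl
      exact ⟨⟨k, ⟨t, ht⟩⟩, rfl⟩
  have h1 : qE v p b = ∑' x : Σ k : ℕ, (FP k (b + 1 - (k : ℤ)) : Set (List ℕ)),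
      wE v p (x.1 :: x.2.1) :=
    ((Equiv.ofBijective _ hbij).tsum_eq (fun s : (FP 1 b : Set (List ℕ)) => wE v p s)).symm
  rw [h1, Summable.tsum_sigma' (fun _ => ENNReal.summable) ENNReal.summable]
  apply tsum_congr
  intro k
  simp_rw [wE_cons, ENNReal.tsum_mul_left]
  rfl

lemma qE_eq_zero {b : ℤ} (hb : b ≤ 0) : qE v p b = 0 := by
  rw [qE, QE, FP_eq_empty_of_nonpos le_rfl hb]
  have : IsEmpty ((∅ : Set (List ℕ)) : Type) := by
    simp only [Set.isEmpty_coe_sort]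
  exact tsum_empty

lemma qE_mono {b b' : ℤ} (h : b ≤ b') : qE v p b ≤ qE v p b' := by
  rw [qE, QE, qE, QE, tsum_subtype, tsum_subtype]
  apply ENNReal.tsum_le_tsum
  intro l
  apply Set.indicator_le_indicator_of_subset
  · intro x hx
    exact ⟨hx.1, fun m hm => ⟨(hx.2 m hm).1, lt_of_le_of_lt (by omega) (hx.2 m hm).2⟩⟩
  · intro x; exact zero_le

lemma le_qE {b : ℤ} (hb : 1 ≤ b) : ENNReal.ofReal (v * p 0) ≤ qE v p b := by
  have hmem : [0] ∈ FP 1 b := by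
    constructor
    · simp [walkL]
    · intro m hm
      simp only [List.length_singleton] at hm
      have : m = 0 := by omega
      subst this
      simp
      omega
  calc ENNReal.ofReal (v * p 0) = wE v p [0] := by simp [wE]
    _ ≤ ∑' l : (FP 1 b : Set (List ℕ)), wE v p l :=
        ENNReal.le_tsum (⟨[0], hmem⟩ : (FP 1 b : Set (List ℕ)))

end HeadTail


section MeasurePart
open MeasureTheory
variable {Ω : Type*} [MeasurableSpace Ω]

/-- The cylinder event determined by a finite list of claim values. -/
def Cyl (C : ℕ → Ω → ℕ) (l : List ℕ) : Set Ω := {ω | ∀ i < l.length, C i ω = l.getD i 0}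

lemma Cyl_eq_iInter (C : ℕ → Ω → ℕ) (l : List ℕ) :
    Cyl C l = ⋂ i ∈ Finset.range l.length, (C i) ⁻¹' {l.getD i 0} := by
  ext ω
  simp [Cyl]

lemma measurableSet_Cyl {C : ℕ → Ω → ℕ} (hC : ∀ i, Measurable (C i)) (l : List ℕ) :
    MeasurableSet (Cyl C l) := by
  rw [Cyl_eq_iInter]
  exact Finset.measurableSet_biInter _ fun i _ => hC i (measurableSet_singleton _)

lemma sum_range_getD (l : List ℕ) : ∀ m, m ≤ l.length →
    ∑ i ∈ Finset.range m, (l.getD i 0 : ℤ) = ((l.take m).sum : ℤ) := by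
  intro m
  induction m with
  | zero => simp
  | succ n ih =>
    intro hm
    have hn : n < l.length := by omega
    rw [Finset.sum_range_succ, ih (by omega)]
    have := List.sum_take_succ l n hn
    rw [this]
    rw [List.getD_eq_getElem l 0 hn]
    push_cast
    ring

lemma walk_eq_walkL {C : ℕ → Ω → ℕ} {ω : Ω} {l : List ℕ} (hω : ω ∈ Cyl C l)
    {m : ℕ} (hm : m ≤ l.length) : walk C 0 m ω = walkL (l.take m) := by
  have hsum : ∑ i ∈ Finset.range m, (C i ω : ℤ) = ∑ i ∈ Finset.range m, (l.getD i 0 : ℤ) := by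
    apply Finset.sum_congr rfl
    intro i hi
    rw [Finset.mem_range] at hi
    rw [hω i (lt_of_lt_of_le hi hm)]
  rw [walk, hsum, sum_range_getD l m hm, walkL]
  rw [List.length_take]
  simp
  omega

lemma sInf_image_eq_coe {T : Set ℕ} {n : ℕ} (hn : n ∈ T) (hmin : ∀ m ∈ T, n ≤ m) :
    sInf ((fun k : ℕ => (k : ℕ∞)) '' T) = (n : ℕ∞) := by
  refine le_antisymm (sInf_le ⟨n, hn, rfl⟩) (le_sInf ?_)
  rintro _ ⟨m, hm, rfl⟩
  show (n : ℕ∞) ≤ (m : ℕ∞)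
  exact_mod_cast hmin m hm

lemma coe_lt_sInf_image {T : Set ℕ} {n : ℕ} (h : ∀ m ∈ T, n < m) :
    (n : ℕ∞) < sInf ((fun k : ℕ => (k : ℕ∞)) '' T) := by
  have h1 : ((n + 1 : ℕ) : ℕ∞) ≤ sInf ((fun k : ℕ => (k : ℕ∞)) '' T) := by
    refine le_sInf ?_
    rintro _ ⟨m, hm, rfl⟩
    show ((n + 1 : ℕ) : ℕ∞) ≤ (m : ℕ∞)
    exact_mod_cast h m hm
  refine lt_of_lt_of_le ?_ h1
  exact_mod_cast Nat.lt_succ_self n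

lemma nonempty_of_sInf_lt_top {T : Set ℕ}
    (h : sInf ((fun k : ℕ => (k : ℕ∞)) '' T) < ⊤) : T.Nonempty := by
  by_contra hT
  rw [Set.not_nonempty_iff_eq_empty] at hT
  subst hT
  simp at h

lemma walk_succ (C : ℕ → Ω → ℕ) (ω : Ω) (m : ℕ) :
    walk C 0 (m + 1) ω = walk C 0 m ω + 1 - C m ω := by
  simp only [walk, Finset.sum_range_succ]
  push_cast
  ring

/-- On the cylinder of a first-passage path, `τ_y⁺` equals the path length and
ruin does not happen before. -/
lemma tau_on_Cyl {C : ℕ → Ω → ℕ} {y : ℕ} {l : List ℕ} (hl : l ∈ FP y 1) {ω : Ω}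
    (hω : ω ∈ Cyl C l) :
    tauPlus C 0 y ω = (l.length : ℕ∞) ∧ (l.length : ℕ∞) < tauMinus C 0 (-1) ω := by
  have hwalk : ∀ m, m ≤ l.length → walk C 0 m ω = walkL (l.take m) :=
    fun m hm => walk_eq_walkL hω hm
  constructor
  · apply sInf_image_eq_coe
    · show (y : ℤ) ≤ walk C 0 l.length ω
      rw [hwalk _ le_rfl, List.take_length, hl.1]
    · intro m hm
      by_contra hlt
      push_neg at hlt
      have h1 := (hl.2 m hlt).1
      have h2 : (y : ℤ) ≤ walk C 0 m ω := hm
      rw [hwalk m hlt.le] at h2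
      omega
  · apply coe_lt_sInf_image
    intro m hm
    by_contra hle
    push_neg at hle
    have h2 : walk C 0 m ω ≤ -1 := hm
    rw [hwalk m hle] at h2
    rcases lt_or_eq_of_le hle with hlt | heq
    · have := (hl.2 m hlt).2
      omega
    · rw [heq, List.take_length, hl.1] at h2
      omega

lemma exists_fp_of_event {C : ℕ → Ω → ℕ} {y : ℕ} {ω : Ω}
    (hω : tauPlus C 0 y ω < tauMinus C 0 (-1) ω) :
    ∃ l, l ∈ FP y 1 ∧ ω ∈ Cyl C l := by
  have htop : tauPlus C 0 y ω < ⊤ := lt_of_lt_of_le hω le_top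
  have hTne : {m : ℕ | (y : ℤ) ≤ walk C 0 m ω}.Nonempty := nonempty_of_sInf_lt_top htop
  set S := {m : ℕ | (y : ℤ) ≤ walk C 0 m ω} with hS
  set n := sInf S with hn
  have hnS : n ∈ S := Nat.sInf_mem hTne
  have hmin : ∀ m ∈ S, n ≤ m := fun m hm => Nat.sInf_le hm
  have hnotS : ∀ m < n, ¬ ((y : ℤ) ≤ walk C 0 m ω) := fun m hm => Nat.notMem_of_lt_sInf hm
  have htau : tauPlus C 0 y ω = (n : ℕ∞) := sInf_image_eq_coe hnS hmin
  -- the walk stays above `-1` up to time `n`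
  have hstay : ∀ m ≤ n, ¬ (walk C 0 m ω ≤ -1) := by
    intro m hm hcon
    have hmem : (m : ℕ∞) ∈ (fun k : ℕ => (k : ℕ∞)) '' {m : ℕ | walk C 0 m ω ≤ (-1 : ℤ)} :=
      ⟨m, hcon, rfl⟩
    have h2 : tauMinus C 0 (-1) ω ≤ (m : ℕ∞) := sInf_le hmem
    have h3 : (m : ℕ∞) ≤ (n : ℕ∞) := by exact_mod_cast hm
    rw [htau] at hω
    exact absurd (lt_of_lt_of_le hω (h2.trans h3)) (lt_irrefl _)
  -- exact hitting
  have hexact : walk C 0 n ω = y := by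
    rcases Nat.eq_zero_or_pos n with h0 | hpos
    · have h1 : (y : ℤ) ≤ walk C 0 n ω := hnS
      rw [h0] at h1 ⊢
      simp [walk] at h1 ⊢
      omega
    · obtain ⟨m', hm'⟩ : ∃ m', n = m' + 1 := ⟨n - 1, by omega⟩
      have h1 := hnotS m' (by omega)
      have h2 : (y : ℤ) ≤ walk C 0 n ω := hnS
      rw [hm'] at h2 ⊢
      have h3 := walk_succ C ω m'
      have h4 : (0 : ℤ) ≤ C m' ω := by positivity
      omega
  refine ⟨List.ofFn (fun i : Fin n => C i ω), ⟨?_, ?_⟩, ?_⟩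
  · have hlen : (List.ofFn (fun i : Fin n => C i ω)).length = n := List.length_ofFn
    have hcyl : ω ∈ Cyl C (List.ofFn (fun i : Fin n => C i ω)) := by
      intro i hi
      rw [hlen] at hi
      rw [List.getD_eq_getElem _ 0 (by rw [hlen]; exact hi)]
      simp
    have hw := walk_eq_walkL hcyl (m := n) (le_of_eq hlen.symm)
    rw [List.take_of_length_le (le_of_eq hlen)] at hw
    rw [← hw]
    exact hexact
  · intro m hm
    rw [List.length_ofFn] at hm
    have hcyl : ω ∈ Cyl C (List.ofFn (fun i : Fin n => C i ω)) := by
      intro i hi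
      rw [List.length_ofFn] at hi
      rw [List.getD_eq_getElem _ 0 (by rw [List.length_ofFn]; exact hi)]
      simp
    have hw := walk_eq_walkL hcyl (l := List.ofFn (fun i : Fin n => C i ω)) (m := m)
      (by rw [List.length_ofFn]; omega)
    rw [← hw]
    constructor
    · have := hnotS m hm
      omega
    · have := hstay m (by omega)
      omega
  · intro i hi
    rw [List.length_ofFn] at hi
    rw [List.getD_eq_getElem _ 0 (by rw [List.length_ofFn]; exact hi)]
    simp

lemma Cyl_disjoint {C : ℕ → Ω → ℕ} {y : ℕ} {b : ℤ} {l l' : List ℕ}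
    (hl : l ∈ FP y b) (hl' : l' ∈ FP y b) (hne : l ≠ l') :
    Disjoint (Cyl C l) (Cyl C l') := by
  rw [Set.disjoint_left]
  intro ω h1 h2
  apply hne
  have key : ∀ a a' : List ℕ, a ∈ FP y b → a' ∈ FP y b → a.length ≤ a'.length →
      ω ∈ Cyl C a → ω ∈ Cyl C a' → a = a' := by
    intro a a' ha ha' hle hc hc'
    have htake : a = a'.take a.length := by
      apply List.ext_getElem
      · rw [List.length_take]; omega
      · intro i hi1 hi2
        have hia : i < a.length := hi1
        have hia' : i < a'.length := by omega
        rw [List.getElem_take]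
        have e1 : a[i] = a.getD i 0 := (List.getD_eq_getElem a 0 hia).symm
        have e2 : a'[i] = a'.getD i 0 := (List.getD_eq_getElem a' 0 hia').symm
        rw [e1, e2, ← hc i hia, ← hc' i hia']
    rcases lt_or_eq_of_le hle with hlt | heq
    · exfalso
      have hcon := (ha'.2 a.length hlt).1
      rw [← htake, ha.1] at hcon
      omega
    · rw [htake, heq, List.take_length]
  rcases le_total l.length l'.length with hle | hle
  · exact key l l' hl hl' hle h1 h2
  · exact (key l' l hl' hl hle h2 h1).symm

lemma prod_range_getD (f : ℕ → ℝ≥0∞) : ∀ l : List ℕ,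
    ∏ i ∈ Finset.range l.length, f (l.getD i 0) = (l.map f).prod := by
  intro l
  induction l with
  | nil => simp
  | cons k t ih =>
    rw [List.length_cons, Finset.prod_range_succ']
    simp only [List.getD_cons_succ, List.getD_cons_zero, List.map_cons, List.prod_cons]
    rw [ih, mul_comm]

lemma meas_Cyl {P : Measure Ω} {C : ℕ → Ω → ℕ} {p : ℕ → ℝ}
    (hindep : ProbabilityTheory.iIndepFun C P)
    (hdist : ∀ i k, P {ω | C i ω = k} = ENNReal.ofReal (p k)) (l : List ℕ) :
    P (Cyl C l) = (l.map fun k => ENNReal.ofReal (p k)).prod := by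
  rw [Cyl_eq_iInter]
  have h1 := hindep.measure_inter_preimage_eq_mul (Finset.range l.length)
    (sets := fun i => {l.getD i 0}) (fun i _ => measurableSet_singleton _)
  rw [h1]
  rw [← prod_range_getD (fun k => ENNReal.ofReal (p k)) l]
  apply Finset.prod_congr rfl
  intro i _
  have : (C i) ⁻¹' {l.getD i 0} = {ω | C i ω = l.getD i 0} := by
    ext ω; simp
  rw [this, hdist i _]

end MeasurePart


section EindPart
open MeasureTheory
variable {Ω : Type*} [MeasurableSpace Ω]
variable {P : Measure Ω} [IsProbabilityMeasure P] {C : ℕ → Ω → ℕ} {p : ℕ → ℝ} {v : ℝ}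

lemma wE_eq_pow_mul (hv0 : 0 ≤ v) (p : ℕ → ℝ) (l : List ℕ) :
    wE v p l = ENNReal.ofReal v ^ l.length * (l.map fun k => ENNReal.ofReal (p k)).prod := by
  induction l with
  | nil => simp
  | cons k t ih =>
    rw [wE_cons, ih, ENNReal.ofReal_mul hv0]
    simp only [List.length_cons, List.map_cons, List.prod_cons, pow_succ]
    ring

lemma wE_le_measure_Cyl
    (hindep : ProbabilityTheory.iIndepFun C P)
    (hdist : ∀ i k, P {ω | C i ω = k} = ENNReal.ofReal (p k))
    (hv0 : 0 ≤ v) (hv1 : v ≤ 1) (l : List ℕ) :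
    wE v p l ≤ P (Cyl C l) := by
  rw [wE_eq_pow_mul hv0, meas_Cyl hindep hdist]
  have h1 : ENNReal.ofReal v ^ l.length ≤ 1 :=
    pow_le_one' (ENNReal.ofReal_le_one.2 hv1) _
  calc ENNReal.ofReal v ^ l.length * (l.map fun k => ENNReal.ofReal (p k)).prod
      ≤ 1 * (l.map fun k => ENNReal.ofReal (p k)).prod := by gcongr
    _ = _ := one_mul _

lemma tsum_meas_Cyl_le_one (hC : ∀ i, Measurable (C i)) (y : ℕ) (b : ℤ) :
    ∑' l : (FP y b : Set (List ℕ)), P (Cyl C l.1) ≤ 1 := by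
  have hdisj : Pairwise (Function.onFun Disjoint fun l : (FP y b : Set (List ℕ)) => Cyl C l.1) := by
    intro a b hne
    exact Cyl_disjoint a.2 b.2 (fun h => hne (Subtype.ext h))
  have hmeas : ∀ l : (FP y b : Set (List ℕ)), MeasurableSet (Cyl C l.1) :=
    fun l => measurableSet_Cyl hC l.1
  rw [← measure_iUnion hdisj hmeas]
  exact prob_le_one

lemma QE_le_one (hC : ∀ i, Measurable (C i))
    (hindep : ProbabilityTheory.iIndepFun C P)
    (hdist : ∀ i k, P {ω | C i ω = k} = ENNReal.ofReal (p k))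
    (hv0 : 0 ≤ v) (hv1 : v ≤ 1) (y : ℕ) (b : ℤ) :
    QE v p y b ≤ 1 := by
  refine le_trans (ENNReal.tsum_le_tsum fun l => wE_le_measure_Cyl hindep hdist hv0 hv1 l.1) ?_
  exact tsum_meas_Cyl_le_one hC y b

lemma Eind_eq_QE (hC : ∀ i, Measurable (C i))
    (hindep : ProbabilityTheory.iIndepFun C P)
    (hdist : ∀ i k, P {ω | C i ω = k} = ENNReal.ofReal (p k))
    (hv0 : 0 ≤ v) (hv1 : v ≤ 1) (y : ℕ) :
    Eind P {ω | tauPlus C 0 (y : ℤ) ω < tauMinus C 0 (-1) ω}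
      (fun ω => v ^ (tauPlus C 0 (y : ℤ) ω).toNat) = (QE v p y 1).toReal := by
  classical
  set A := {ω | tauPlus C 0 (y : ℤ) ω < tauMinus C 0 (-1) ω} with hA
  set F : (FP y 1 : Set (List ℕ)) → Ω → ℝ :=
    fun l => (Cyl C l.1).indicator (fun _ => v ^ l.1.length) with hF
  have hpt : ∀ ω, A.indicator (fun ω => v ^ (tauPlus C 0 (y : ℤ) ω).toNat) ω
      = ∑' l, F l ω := by
    intro ω
    by_cases hωA : ω ∈ A
    · obtain ⟨l₀, hl₀, hωl₀⟩ := exists_fp_of_event hωA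
      have htau := tau_on_Cyl hl₀ hωl₀
      rw [Set.indicator_of_mem hωA]
      rw [tsum_eq_single (⟨l₀, hl₀⟩ : (FP y 1 : Set (List ℕ)))]
      · rw [hF]
        simp only [Set.indicator_of_mem hωl₀]
        rw [htau.1]
        simp
      · intro l hne
        rw [hF]
        simp only []
        have hnotmem : ω ∉ Cyl C l.1 := by
          intro hmem
          have hd := Cyl_disjoint (C := C) l.2 hl₀ (fun h => hne (Subtype.ext h))
          exact Set.disjoint_left.1 hd hmem hωl₀
        exact Set.indicator_of_notMem hnotmem _
    · rw [Set.indicator_of_notMem hωA]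
      have hz : ∀ l : (FP y 1 : Set (List ℕ)), F l ω = 0 := by
        intro l
        rw [hF]
        simp only []
        have hnotmem : ω ∉ Cyl C l.1 := by
          intro hmem
          have htau := tau_on_Cyl l.2 hmem
          exact hωA (show ω ∈ A by rw [hA, Set.mem_setOf_eq, htau.1]; exact htau.2)
        exact Set.indicator_of_notMem hnotmem _
      rw [tsum_congr hz, tsum_zero]
  rw [Eind]
  have hint : ∫ ω, A.indicator (fun ω => v ^ (tauPlus C 0 (y : ℤ) ω).toNat) ω ∂P
      = ∫ ω, (∑' l, F l ω) ∂P := by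
    apply integral_congr_ae
    filter_upwards with ω using hpt ω
  rw [hint]
  have hmeasF : ∀ l : (FP y 1 : Set (List ℕ)), AEStronglyMeasurable (F l) P := fun l =>
    (stronglyMeasurable_const.indicator (measurableSet_Cyl hC l.1)).aestronglyMeasurable
  have hnn1 : ∀ l : (FP y 1 : Set (List ℕ)), (‖v ^ l.1.length‖₊ : ℝ≥0∞) ≤ 1 := by
    intro l
    have habs : ‖v ^ l.1.length‖ ≤ 1 := by
      rw [Real.norm_eq_abs, abs_of_nonneg (pow_nonneg hv0 _)]
      exact pow_le_one₀ hv0 hv1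
    rw [show (‖v ^ l.1.length‖₊ : ℝ≥0∞) = ENNReal.ofReal ‖v ^ l.1.length‖ from (ofReal_norm _).symm]
    calc ENNReal.ofReal ‖v ^ l.1.length‖ ≤ ENNReal.ofReal 1 := ENNReal.ofReal_le_ofReal habs
      _ = 1 := ENNReal.ofReal_one
  have hlint : ∀ l : (FP y 1 : Set (List ℕ)),
      ∫⁻ ω, ‖F l ω‖₊ ∂P = (‖v ^ l.1.length‖₊ : ℝ≥0∞) * P (Cyl C l.1) := by
    intro l
    have hptw : ∀ ω, (‖F l ω‖₊ : ℝ≥0∞)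
        = (Cyl C l.1).indicator (fun _ => ((‖v ^ l.1.length‖₊ : ℝ≥0∞))) ω := by
      intro ω
      rw [hF]
      simp only [Set.indicator_apply]
      split_ifs <;> simp
    rw [lintegral_congr hptw, lintegral_indicator (measurableSet_Cyl hC l.1)]
    simp
  have hbound : ∑' l : (FP y 1 : Set (List ℕ)), ∫⁻ ω, ‖F l ω‖₊ ∂P ≠ ⊤ := by
    have h1 : ∑' l : (FP y 1 : Set (List ℕ)), ∫⁻ ω, ‖F l ω‖₊ ∂P ≤ 1 := by
      refine le_trans (ENNReal.tsum_le_tsum fun l => ?_) (tsum_meas_Cyl_le_one (P := P) hC y 1)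
      rw [hlint l]
      calc (‖v ^ l.1.length‖₊ : ℝ≥0∞) * P (Cyl C l.1) ≤ 1 * P (Cyl C l.1) := by
            gcongr
            exact hnn1 l
        _ = P (Cyl C l.1) := one_mul _
    exact (lt_of_le_of_lt h1 ENNReal.one_lt_top).ne
  rw [integral_tsum hmeasF hbound]
  have hterm : ∀ l : (FP y 1 : Set (List ℕ)),
      ∫ ω, F l ω ∂P = (P (Cyl C l.1)).toReal • (v ^ l.1.length) := by
    intro l
    rw [hF]
    exact integral_indicator_const _ (measurableSet_Cyl hC l.1)
  rw [tsum_congr hterm]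
  have hfin : ∀ l : (FP y 1 : Set (List ℕ)), wE v p l.1 ≠ ⊤ := fun l =>
    ((wE_le_measure_Cyl hindep hdist hv0 hv1 l.1).trans_lt (measure_lt_top P _)).ne
  rw [QE, ENNReal.tsum_toReal_eq hfin]
  apply tsum_congr
  intro l
  rw [wE_eq_pow_mul hv0, ← meas_Cyl hindep hdist, ENNReal.toReal_mul, ENNReal.toReal_pow,
    ENNReal.toReal_ofReal hv0, smul_eq_mul, mul_comm]

end EindPart


section Analytic

def qr (v : ℝ) (p : ℕ → ℝ) (b : ℤ) : ℝ := (qE v p b).toReal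

def Qr (v : ℝ) (p : ℕ → ℝ) (x : ℕ) : ℝ := ∏ i ∈ Finset.range x, qr v p (1 + i)

variable {p : ℕ → ℝ} {v : ℝ}

lemma summable_p (hnn : ∀ k, 0 ≤ p k) (hsum : ∑' k, p k = 1) : Summable p := by
  by_contra h
  rw [tsum_eq_zero_of_not_summable h] at hsum
  norm_num at hsum

lemma qr_nonneg (b : ℤ) : 0 ≤ qr v p b := ENNReal.toReal_nonneg

lemma qE_ne_top (hq1 : ∀ y b, QE v p y b ≤ 1) (b : ℤ) : qE v p b ≠ ⊤ :=
  ((hq1 1 b).trans_lt ENNReal.one_lt_top).ne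

lemma qr_mono (hq1 : ∀ y b, QE v p y b ≤ 1) {b b' : ℤ} (h : b ≤ b') :
    qr v p b ≤ qr v p b' :=
  ENNReal.toReal_le_toReal (qE_ne_top hq1 b) (qE_ne_top hq1 b') |>.2 (qE_mono v p h)

lemma qr_le_one (hq1 : ∀ y b, QE v p y b ≤ 1) (b : ℤ) : qr v p b ≤ 1 := by
  have := hq1 1 b
  calc qr v p b ≤ (1 : ℝ≥0∞).toReal := ENNReal.toReal_le_toReal (qE_ne_top hq1 b) (by simp) |>.2 this
    _ = 1 := by simp

lemma qr_of_nonpos {b : ℤ} (hb : b ≤ 0) : qr v p b = 0 := by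
  rw [qr, qE_eq_zero v p hb]
  simp

lemma vp0_le_qr (hq1 : ∀ y b, QE v p y b ≤ 1) (hvp : 0 ≤ v * p 0) {b : ℤ} (hb : 1 ≤ b) :
    v * p 0 ≤ qr v p b := by
  have h2 := ENNReal.toReal_mono (qE_ne_top hq1 b) (le_qE v p hb)
  rwa [ENNReal.toReal_ofReal hvp] at h2

lemma QE_toReal (hq1 : ∀ y b, QE v p y b ≤ 1) (y : ℕ) (b : ℤ) :
    (QE v p y b).toReal = ∏ i ∈ Finset.range y, qr v p (b + i) := by
  rw [QE_prod v p y b, ENNReal.toReal_prod]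
  rfl

lemma Qr_eq (hq1 : ∀ y b, QE v p y b ≤ 1) (y : ℕ) :
    (QE v p y 1).toReal = Qr v p y := by
  rw [QE_toReal hq1 y 1, Qr]

end Analytic


section Analytic2
open Filter Topology
variable {p : ℕ → ℝ} {v : ℝ}

lemma summable_mul_of_le_one (hp : Summable p) (hnn : ∀ k, 0 ≤ p k) {g : ℕ → ℝ}
    (hg0 : ∀ k, 0 ≤ g k) (hg1 : ∀ k, g k ≤ 1) : Summable fun k => p k * g k := by
  refine Summable.of_nonneg_of_le (fun k => mul_nonneg (hnn k) (hg0 k)) (fun k => ?_) hp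
  calc p k * g k ≤ p k * 1 := by
        apply mul_le_mul_of_nonneg_left (hg1 k) (hnn k)
    _ = p k := mul_one _

lemma prod_qr_nonneg (k : ℕ) (c : ℤ) : 0 ≤ ∏ i ∈ Finset.range k, qr v p (c + i) :=
  Finset.prod_nonneg fun i _ => qr_nonneg _

lemma prod_qr_le_one (hq1 : ∀ y b, QE v p y b ≤ 1) (k : ℕ) (c : ℤ) :
    ∏ i ∈ Finset.range k, qr v p (c + i) ≤ 1 := by
  calc ∏ i ∈ Finset.range k, qr v p (c + i) ≤ ∏ i ∈ Finset.range k, 1 :=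
        Finset.prod_le_prod (fun i _ => qr_nonneg _) (fun i _ => qr_le_one hq1 _)
    _ = 1 := by simp

lemma qr_rec (hq1 : ∀ y b, QE v p y b ≤ 1) (hnn : ∀ k, 0 ≤ p k) (hv0 : 0 ≤ v)
    {b : ℤ} (hb : 1 ≤ b) :
    qr v p b = v * ∑' k : ℕ, p k * ∏ i ∈ Finset.range k, qr v p (b + 1 - k + i) := by
  have hfin : ∀ k : ℕ, ENNReal.ofReal (v * p k) * QE v p k (b + 1 - k) ≠ ⊤ :=
    fun k => ENNReal.mul_ne_top ENNReal.ofReal_ne_top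
      ((hq1 k _).trans_lt ENNReal.one_lt_top).ne
  rw [qr, qE_eq_tsum v p hb, ENNReal.tsum_toReal_eq hfin]
  have hterm : ∀ k : ℕ, (ENNReal.ofReal (v * p k) * QE v p k (b + 1 - k)).toReal
      = v * (p k * ∏ i ∈ Finset.range k, qr v p (b + 1 - k + i)) := by
    intro k
    rw [ENNReal.toReal_mul, ENNReal.toReal_ofReal (mul_nonneg hv0 (hnn k)),
      QE_toReal hq1 k _]
    ring
  rw [tsum_congr hterm, tsum_mul_left]

/-- The limit of `qr` as the barrier recedes. -/
def sv (v : ℝ) (p : ℕ → ℝ) : ℝ := ⨆ n : ℕ, qr v p (n : ℤ)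

lemma bddAbove_qr (hq1 : ∀ y b, QE v p y b ≤ 1) :
    BddAbove (Set.range fun n : ℕ => qr v p (n : ℤ)) := by
  refine ⟨1, ?_⟩
  rintro x ⟨n, rfl⟩
  exact qr_le_one hq1 _

lemma qr_le_sv (hq1 : ∀ y b, QE v p y b ≤ 1) (b : ℤ) : qr v p b ≤ sv v p := by
  have h1 : qr v p b ≤ qr v p (b.toNat : ℤ) := qr_mono hq1 (Int.self_le_toNat b)
  exact h1.trans (le_ciSup (bddAbove_qr hq1) b.toNat)

lemma sv_le_one (hq1 : ∀ y b, QE v p y b ≤ 1) : sv v p ≤ 1 :=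
  ciSup_le fun n => qr_le_one hq1 _

lemma sv_nonneg (hq1 : ∀ y b, QE v p y b ≤ 1) : 0 ≤ sv v p :=
  le_trans (qr_nonneg ((0 : ℕ) : ℤ)) (le_ciSup (bddAbove_qr hq1) 0)

lemma vp0_le_sv (hq1 : ∀ y b, QE v p y b ≤ 1) (hvp : 0 ≤ v * p 0) : v * p 0 ≤ sv v p :=
  (vp0_le_qr hq1 hvp (b := 1) le_rfl).trans (qr_le_sv hq1 1)

lemma tendsto_qr_sv (hq1 : ∀ y b, QE v p y b ≤ 1) :
    Tendsto (fun n : ℕ => qr v p (n : ℤ)) atTop (nhds (sv v p)) :=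
  tendsto_atTop_ciSup (fun a b hab => qr_mono hq1 (by exact_mod_cast hab)) (bddAbove_qr hq1)

end Analytic2


section Fixed
open Filter Topology
variable {p : ℕ → ℝ} {v : ℝ}

lemma sv_fixed (hq1 : ∀ y b, QE v p y b ≤ 1) (hnn : ∀ k, 0 ≤ p k) (hp : Summable p)
    (hv0 : 0 ≤ v) : sv v p = v * ptilde p (sv v p) := by
  set s := sv v p with hs
  have hs0 : 0 ≤ s := sv_nonneg hq1
  have hs1 : s ≤ 1 := sv_le_one hq1
  have hsummable : Summable fun k => p k * s ^ k :=
    summable_mul_of_le_one hp hnn (fun k => pow_nonneg hs0 k) (fun k => pow_le_one₀ hs0 hs1)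
  have hupper : s ≤ v * ptilde p s := by
    apply ciSup_le
    intro n
    rcases Nat.eq_zero_or_pos n with h0 | hpos
    · subst h0
      have hz : qr v p ((0 : ℕ) : ℤ) = 0 := qr_of_nonpos (by norm_num)
      rw [hz]
      exact mul_nonneg hv0 (tsum_nonneg fun k => mul_nonneg (hnn k) (pow_nonneg hs0 k))
    · have hb : (1 : ℤ) ≤ (n : ℤ) := by exact_mod_cast hpos
      rw [qr_rec hq1 hnn hv0 hb]
      apply mul_le_mul_of_nonneg_left ?_ hv0
      refine Summable.tsum_le_tsum (fun k => ?_) ?_ hsummable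
      · apply mul_le_mul_of_nonneg_left ?_ (hnn k)
        calc ∏ i ∈ Finset.range k, qr v p ((n : ℤ) + 1 - k + i)
            ≤ ∏ i ∈ Finset.range k, s :=
              Finset.prod_le_prod (fun i _ => qr_nonneg _) (fun i _ => qr_le_sv hq1 _)
          _ = s ^ k := by rw [Finset.prod_const, Finset.card_range]
      · exact summable_mul_of_le_one hp hnn (fun k => prod_qr_nonneg k _)
          (fun k => prod_qr_le_one hq1 k _)
  have hlowerK : ∀ K : ℕ, v * ∑ k ∈ Finset.range (K + 1), p k * s ^ k ≤ s := by
    intro K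
    have hkey : ∀ m : ℕ, 1 ≤ m →
        v * ∑ k ∈ Finset.range (K + 1), p k * qr v p (m : ℤ) ^ k
          ≤ qr v p ((m + K : ℕ) : ℤ) := by
      intro m hm
      have hb : (1 : ℤ) ≤ ((m + K : ℕ) : ℤ) := by push_cast; omega
      rw [qr_rec hq1 hnn hv0 hb]
      apply mul_le_mul_of_nonneg_left ?_ hv0
      refine le_trans ?_ (Summable.sum_le_tsum (Finset.range (K + 1))
        (fun k _ => mul_nonneg (hnn k) (prod_qr_nonneg k _))
        (summable_mul_of_le_one hp hnn (fun k => prod_qr_nonneg k _)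
          (fun k => prod_qr_le_one hq1 k _)))
      apply Finset.sum_le_sum
      intro k hk
      rw [Finset.mem_range] at hk
      apply mul_le_mul_of_nonneg_left ?_ (hnn k)
      calc qr v p (m : ℤ) ^ k = ∏ _i ∈ Finset.range k, qr v p (m : ℤ) := by
            rw [Finset.prod_const, Finset.card_range]
        _ ≤ ∏ i ∈ Finset.range k, qr v p (((m + K : ℕ) : ℤ) + 1 - k + i) :=
            Finset.prod_le_prod (fun i _ => qr_nonneg _)
              (fun i hi => qr_mono hq1 (by
                rw [Finset.mem_range] at hi
                push_cast
                omega))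
    have htend : Tendsto
        (fun m : ℕ => v * ∑ k ∈ Finset.range (K + 1), p k * qr v p (m : ℤ) ^ k)
        atTop (nhds (v * ∑ k ∈ Finset.range (K + 1), p k * s ^ k)) := by
      apply Tendsto.const_mul
      apply tendsto_finset_sum
      intro k _
      exact ((tendsto_qr_sv hq1).pow k).const_mul (p k)
    refine le_of_tendsto htend ?_
    filter_upwards [eventually_ge_atTop 1] with m hm
    exact (hkey m hm).trans (qr_le_sv hq1 _)
  have hlower : v * ptilde p s ≤ s := by
    have hps : Tendsto (fun K : ℕ => v * ∑ k ∈ Finset.range (K + 1), p k * s ^ k)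
        atTop (nhds (v * ptilde p s)) := by
      have h1 := hsummable.hasSum.tendsto_sum_nat
      have h2 : Tendsto (fun K : ℕ => K + 1) atTop atTop := tendsto_add_atTop_nat 1
      exact (h1.comp h2).const_mul v
    exact le_of_tendsto hps (Eventually.of_forall hlowerK)
  linarith

end Fixed


section Wrec
variable {p : ℕ → ℝ} {v : ℝ}

def Wr (v : ℝ) (p : ℕ → ℝ) (x : ℕ) : ℝ := 1 / (p 0 * Qr v p x)

lemma Qr_pos (hq1 : ∀ y b, QE v p y b ≤ 1) (hvp : 0 < v * p 0) (x : ℕ) : 0 < Qr v p x := by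
  apply Finset.prod_pos
  intro i _
  exact lt_of_lt_of_le hvp (vp0_le_qr hq1 hvp.le (by omega))

lemma Qr_split (hk : ∀ i : ℕ, True) {n k : ℕ} (hkn : k ≤ n) :
    Qr v p n = Qr v p (n - k) * ∏ i ∈ Finset.range k, qr v p ((n : ℤ) + 1 - k + i) := by
  have h1 : n = (n - k) + k := by omega
  rw [show Qr v p n = Qr v p ((n - k) + k) by rw [← h1], Qr, Finset.prod_range_add]
  congr 1
  apply Finset.prod_congr rfl
  intro i _
  congr 1
  push_cast
  omega

lemma Wrec (hq1 : ∀ y b, QE v p y b ≤ 1) (hnn : ∀ k, 0 ≤ p k) (hp0 : 0 < p 0)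
    (hv0 : 0 < v) {n : ℕ} (hn : 1 ≤ n) :
    ∑ k ∈ Finset.range (n + 1), p k * Wr v p (n - k) = Wr v p (n - 1) / v := by
  have hvp : 0 < v * p 0 := mul_pos hv0 hp0
  have hQpos : ∀ x, 0 < Qr v p x := Qr_pos hq1 hvp
  have hApos : ∀ k : ℕ, k ≤ n → 0 < ∏ i ∈ Finset.range k, qr v p ((n : ℤ) + 1 - k + i) := by
    intro k hkn
    apply Finset.prod_pos
    intro i hi
    rw [Finset.mem_range] at hi
    refine lt_of_lt_of_le hvp (vp0_le_qr hq1 hvp.le ?_)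
    push_cast
    omega
  have hE : qr v p (n : ℤ) =
      v * ∑ k ∈ Finset.range (n + 1), p k * ∏ i ∈ Finset.range k, qr v p ((n : ℤ) + 1 - k + i) := by
    rw [qr_rec hq1 hnn hv0.le (by exact_mod_cast hn)]
    congr 1
    apply tsum_eq_sum
    intro k hk
    rw [Finset.mem_range, not_lt] at hk
    apply mul_eq_zero_of_right
    have h0k : 0 ∈ Finset.range k := by
      rw [Finset.mem_range]
      omega
    apply Finset.prod_eq_zero h0k
    apply qr_of_nonpos
    push_cast
    omega
  have hQn : Qr v p n = Qr v p (n - 1) * qr v p (n : ℤ) := by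
    have := Qr_split (p := p) (v := v) (fun _ => trivial) (n := n) (k := 1)
      (by omega)
    rw [this]
    congr 1
    rw [Finset.prod_range_one]
    congr 1
    push_cast
    omega
  have hqn_pos : 0 < qr v p (n : ℤ) :=
    lt_of_lt_of_le hvp (vp0_le_qr hq1 hvp.le (by exact_mod_cast hn))
  have hcalc : ∀ k ∈ Finset.range (n + 1), p k * Wr v p (n - k)
      = (p k * ∏ i ∈ Finset.range k, qr v p ((n : ℤ) + 1 - k + i)) / (p 0 * Qr v p n) := by
    intro k hk
    rw [Finset.mem_range] at hk
    have hk' : k ≤ n := by omega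
    have hs := Qr_split (p := p) (v := v) (fun _ => trivial) hk'
    rw [Wr, hs]
    have h1 : (0 : ℝ) < Qr v p (n - k) := hQpos _
    have h2 := hApos k hk'
    field_simp
  rw [Finset.sum_congr rfl hcalc, ← Finset.sum_div]
  have hS : ∑ k ∈ Finset.range (n + 1),
      (p k * ∏ i ∈ Finset.range k, qr v p ((n : ℤ) + 1 - k + i)) = qr v p (n : ℤ) / v := by
    rw [hE]
    field_simp
  rw [hS, Wr]
  have h1 : (0 : ℝ) < Qr v p (n - 1) := hQpos _
  have h2 : (0 : ℝ) < Qr v p n := hQpos _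
  rw [hQn]
  field_simp

end Wrec


section Dpos
variable {p : ℕ → ℝ} {v : ℝ}

lemma ptilde_zero (hnn : ∀ k, 0 ≤ p k) : ptilde p 0 = p 0 := by
  rw [ptilde, tsum_eq_single 0 (fun k hk => by simp [zero_pow hk])]
  simp

lemma ptilde_nonneg (hnn : ∀ k, 0 ≤ p k) {z : ℝ} (hz : 0 ≤ z) : 0 ≤ ptilde p z :=
  tsum_nonneg fun k => mul_nonneg (hnn k) (pow_nonneg hz k)

lemma ptilde_continuousOn (hnn : ∀ k, 0 ≤ p k) (hp : Summable p) :
    ContinuousOn (ptilde p) (Set.Icc (0 : ℝ) 1) := by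
  rw [continuousOn_iff_continuous_restrict]
  have : (Set.Icc (0 : ℝ) 1).restrict (ptilde p)
      = fun x : (Set.Icc (0 : ℝ) 1) => ∑' k, p k * (x : ℝ) ^ k := rfl
  change Continuous ((Set.Icc (0 : ℝ) 1).restrict (ptilde p)); rw [this]
  apply continuous_tsum (u := p) ?_ hp
  · intro k x
    rw [Real.norm_eq_abs, abs_mul, abs_of_nonneg (hnn k), abs_pow]
    have hx0 : (0 : ℝ) ≤ (x : ℝ) := x.2.1
    have hx1 : (x : ℝ) ≤ 1 := x.2.2
    calc p k * |(x : ℝ)| ^ k ≤ p k * 1 := by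
          apply mul_le_mul_of_nonneg_left ?_ (hnn k)
          apply pow_le_one₀ (abs_nonneg _)
          rw [abs_of_nonneg hx0]
          exact hx1
      _ = p k := mul_one _
  · intro k
    exact continuous_const.mul (continuous_subtype_val.pow k)

lemma d_pos (hnn : ∀ k, 0 ≤ p k) (hp : Summable p) (hp0 : 0 < p 0)
    (hv0 : 0 < v) {φv : ℝ}
    (hφ : IsLeast {ξ : ℝ | ξ ∈ Set.Ioc (0 : ℝ) 1 ∧ ξ = v * ptilde p ξ} φv)
    {z : ℝ} (hz : z ∈ Set.Ioo 0 φv) : 0 < ptilde p z - z / v := by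
  by_contra hcon
  push_neg at hcon
  have hφ1 : φv ≤ 1 := hφ.1.1.2
  have hz0 : 0 < z := hz.1
  have hzφ : z < φv := hz.2
  have hz1 : z ≤ 1 := le_trans hzφ.le hφ1
  set g : ℝ → ℝ := fun x => v * ptilde p x - x with hg
  have hg0 : 0 < g 0 := by
    rw [hg]
    simp only [sub_zero]
    rw [ptilde_zero hnn]
    positivity
  have hgz : g z ≤ 0 := by
    rw [hg]
    simp only []
    have : ptilde p z ≤ z / v := by linarith
    calc v * ptilde p z - z ≤ v * (z / v) - z := by
          apply sub_le_sub_right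
          exact mul_le_mul_of_nonneg_left this hv0.le
      _ = 0 := by field_simp; ring
  have hcont : ContinuousOn g (Set.Icc 0 z) := by
    apply ContinuousOn.sub
    · exact continuousOn_const.mul ((ptilde_continuousOn hnn hp).mono
        (Set.Icc_subset_Icc le_rfl hz1))
    · exact continuousOn_id
  have hmem : (0 : ℝ) ∈ Set.Icc (g z) (g 0) := ⟨hgz, hg0.le⟩
  obtain ⟨ξ, hξmem, hξ⟩ := intermediate_value_Icc' hz0.le hcont hmem
  have hξ0 : ξ ≠ 0 := by
    intro h
    rw [h] at hξ
    rw [hξ] at hg0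
    exact lt_irrefl 0 hg0
  have hroot : ξ = v * ptilde p ξ := by
    have : v * ptilde p ξ - ξ = 0 := hξ
    linarith
  have hξIoc : ξ ∈ Set.Ioc (0 : ℝ) 1 := by
    constructor
    · rcases lt_or_eq_of_le hξmem.1 with h | h
      · exact h
      · exact absurd h.symm hξ0
    · exact le_trans hξmem.2 hz1
  have := hφ.2 ⟨hξIoc, hroot⟩
  have : φv ≤ z := le_trans this hξmem.2
  linarith

end Dpos


section MainPure
variable {p : ℕ → ℝ} {v : ℝ}

lemma Qr_zero : Qr v p 0 = 1 := by simp [Qr]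

lemma Qr_succ' (x : ℕ) : Qr v p (x + 1) = Qr v p x * qr v p (1 + (x : ℤ)) := by
  rw [Qr, Finset.prod_range_succ]
  rfl

lemma main_pure (hq1 : ∀ y b, QE v p y b ≤ 1) (hnn : ∀ k, 0 ≤ p k)
    (hsum : ∑' k, p k = 1) (hp0 : 0 < p 0) (hv : v ∈ Set.Ioc (0 : ℝ) 1)
    {φv : ℝ} (hφ : IsLeast {ξ : ℝ | ξ ∈ Set.Ioc (0 : ℝ) 1 ∧ ξ = v * ptilde p ξ} φv)
    {z : ℝ} (hz : z ∈ Set.Ioo 0 φv) :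
    0 < ptilde p z - z / v ∧ Summable (fun x : ℕ => z ^ x * Wr v p x) ∧
      ∑' x : ℕ, z ^ x * Wr v p x = 1 / (ptilde p z - z / v) := by
  obtain ⟨hv0, hv1⟩ := hv
  have hp : Summable p := summable_p hnn hsum
  have hd : 0 < ptilde p z - z / v := d_pos hnn hp hp0 hv0 hφ hz
  have hvp : 0 < v * p 0 := mul_pos hv0 hp0
  -- `φv ≤ sv`
  have hsv_pos : 0 < sv v p := lt_of_lt_of_le hvp (vp0_le_sv hq1 hvp.le)
  have hφsv : φv ≤ sv v p :=
    hφ.2 ⟨⟨hsv_pos, sv_le_one hq1⟩, sv_fixed hq1 hnn hp hv0.le⟩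
  have hz0 : 0 < z := hz.1
  have hzsv : z < sv v p := lt_of_lt_of_le hz.2 hφsv
  -- pick `r` strictly between `z` and `sv`
  obtain ⟨r, hzr, hrsv⟩ : ∃ r : ℝ, z < r ∧ r < sv v p :=
    ⟨(z + sv v p) / 2, by linarith, by linarith⟩
  have hr0 : 0 < r := lt_trans hz0 hzr
  have hr1 : r < 1 := lt_of_lt_of_le hrsv (sv_le_one hq1)
  -- pick `M ≥ 1` with `r < qr M`
  obtain ⟨M₀, hM₀⟩ := exists_lt_of_lt_ciSup (by rw [sv] at hrsv; exact hrsv)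
  set M : ℕ := max M₀ 1 with hM
  have hM1 : 1 ≤ M := le_max_right _ _
  have hqrM : r < qr v p (M : ℤ) :=
    lt_of_lt_of_le hM₀ (qr_mono hq1 (by exact_mod_cast le_max_left M₀ 1))
  have hqr_ge : ∀ c : ℤ, (M : ℤ) ≤ c → r ≤ qr v p c :=
    fun c hc => le_trans hqrM.le (qr_mono hq1 hc)
  have hQpos : ∀ x, 0 < Qr v p x := Qr_pos hq1 hvp
  -- geometric lower bound for `Qr`
  have hQrlow : ∀ j : ℕ, Qr v p M * r ^ j ≤ Qr v p (M + j) := by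
    intro j
    induction j with
    | zero => simp
    | succ i ih =>
      have h1 : Qr v p (M + (i + 1)) = Qr v p (M + i) * qr v p (1 + ((M + i : ℕ) : ℤ)) := by
        rw [show M + (i + 1) = (M + i) + 1 by omega, Qr_succ' (M + i)]
      rw [h1, pow_succ, ← mul_assoc]
      apply mul_le_mul ih (hqr_ge _ (by push_cast; omega)) hr0.le (hQpos _).le
  have hWr_pos : ∀ x, 0 < Wr v p x := fun x => by
    rw [Wr]
    exact one_div_pos.mpr (mul_pos hp0 (hQpos x))
  have hWr_nonneg : ∀ x, 0 ≤ Wr v p x := fun x => (hWr_pos x).le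
  -- summability of the generating series
  set gfun : ℕ → ℝ := fun x => z ^ x * Wr v p x with hgfun
  have hg_nonneg : ∀ x, 0 ≤ gfun x := fun x =>
    mul_nonneg (pow_nonneg hz0.le x) (hWr_nonneg x)
  have hgsum : Summable gfun := by
    rw [← summable_nat_add_iff M]
    set Cst : ℝ := z ^ M / (p 0 * Qr v p M) with hCst
    have hbound : ∀ j : ℕ, gfun (j + M) ≤ Cst * (z / r) ^ j := by
      intro j
      rw [hgfun]
      simp only []
      have h1 : Wr v p (j + M) ≤ 1 / (p 0 * (Qr v p M * r ^ j)) := by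
        rw [Wr]
        apply one_div_le_one_div_of_le
        · exact mul_pos hp0 (mul_pos (hQpos M) (pow_pos hr0 j))
        · rw [show j + M = M + j by omega]
          exact mul_le_mul_of_nonneg_left (hQrlow j) hp0.le
      calc z ^ (j + M) * Wr v p (j + M) ≤ z ^ (j + M) * (1 / (p 0 * (Qr v p M * r ^ j))) :=
            mul_le_mul_of_nonneg_left h1 (pow_nonneg hz0.le _)
        _ = Cst * (z / r) ^ j := by
            rw [hCst, pow_add, div_pow]
            have hQM := hQpos M
            field_simp
    apply Summable.of_nonneg_of_le (fun j => hg_nonneg _) hbound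
    apply Summable.mul_left
    apply summable_geometric_of_lt_one (by positivity)
    rw [div_lt_one hr0]
    exact hzr
  -- Cauchy product
  set ffun : ℕ → ℝ := fun k => p k * z ^ k with hffun
  have hf_nonneg : ∀ k, 0 ≤ ffun k := fun k =>
    mul_nonneg (hnn k) (pow_nonneg hz0.le k)
  have hfsum : Summable ffun :=
    summable_mul_of_le_one hp hnn (fun k => pow_nonneg hz0.le k)
      (fun k => pow_le_one₀ hz0.le (le_trans hz.2.le (le_trans hφsv (sv_le_one hq1))))
  have hfnorm : Summable fun k => ‖ffun k‖ := by
    have : (fun k => ‖ffun k‖) = ffun := funext fun k => abs_of_nonneg (hf_nonneg k)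
    rw [this]
    exact hfsum
  have hgnorm : Summable fun x => ‖gfun x‖ := by
    have : (fun x => ‖gfun x‖) = gfun := funext fun x => abs_of_nonneg (hg_nonneg x)
    rw [this]
    exact hgsum
  have hcauchy := tsum_mul_tsum_eq_tsum_sum_range_of_summable_norm hfnorm hgnorm
  -- identify the `n`-th Cauchy coefficient
  have hinner : ∀ n : ℕ, ∑ k ∈ Finset.range (n + 1), ffun k * gfun (n - k)
      = if n = 0 then 1 else (z / v) * gfun (n - 1) := by
    intro n
    have h1 : ∀ k ∈ Finset.range (n + 1), ffun k * gfun (n - k)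
        = z ^ n * (p k * Wr v p (n - k)) := by
      intro k hk
      rw [Finset.mem_range] at hk
      have hzz : z ^ k * z ^ (n - k) = z ^ n := by
        rw [← pow_add]
        congr 1
        omega
      calc ffun k * gfun (n - k) = (p k * z ^ k) * (z ^ (n - k) * Wr v p (n - k)) := rfl
        _ = (z ^ k * z ^ (n - k)) * (p k * Wr v p (n - k)) := by ring
        _ = z ^ n * (p k * Wr v p (n - k)) := by rw [hzz]
    rw [Finset.sum_congr rfl h1, ← Finset.mul_sum]
    rcases Nat.eq_zero_or_pos n with h0 | hpos
    · subst h0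
      rw [if_pos rfl]
      rw [Finset.sum_range_one, pow_zero, one_mul, Nat.sub_zero, Wr, Qr_zero]
      field_simp
    · rw [if_neg (by omega)]
      rw [Wrec hq1 hnn hp0 hv0 hpos]
      rw [hgfun]
      simp only []
      have hzz : z ^ n = z * z ^ (n - 1) := by
        rw [← pow_succ']
        congr 1
        omega
      rw [hzz]
      field_simp
  -- assemble the generating-function identity
  set T := ∑' x, gfun x with hT
  have hhsummable : Summable (fun n => if n = 0 then (1 : ℝ) else (z / v) * gfun (n - 1)) := by
    rw [← summable_nat_add_iff 1]
    have heq : (fun n : ℕ => if n + 1 = 0 then (1 : ℝ) else (z / v) * gfun (n + 1 - 1))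
        = fun n : ℕ => (z / v) * gfun n := by
      funext n
      rw [if_neg (Nat.succ_ne_zero n), Nat.add_sub_cancel]
    rw [heq]
    exact hgsum.mul_left _
  have hRHS : ∑' n : ℕ, (if n = 0 then (1 : ℝ) else (z / v) * gfun (n - 1))
      = 1 + (z / v) * T := by
    rw [Summable.tsum_eq_zero_add hhsummable]
    have heq : (fun n : ℕ => if n + 1 = 0 then (1 : ℝ) else (z / v) * gfun (n + 1 - 1))
        = fun n : ℕ => (z / v) * gfun n := by
      funext n
      rw [if_neg (Nat.succ_ne_zero n), Nat.add_sub_cancel]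
    rw [if_pos rfl]
    congr 1
    rw [heq, tsum_mul_left]
  have hkey : ptilde p z * T = 1 + (z / v) * T := by
    have hptz : ∑' k, ffun k = ptilde p z := rfl
    rw [← hptz, hT, hcauchy, tsum_congr hinner, hRHS]
  refine ⟨hd, hgsum, ?_⟩
  have hdT : T * (ptilde p z - z / v) = 1 := by
    calc T * (ptilde p z - z / v) = ptilde p z * T - (z / v) * T := by ring
      _ = 1 := by rw [hkey]; ring
  exact eq_one_div_of_mul_eq_one_left hdT

end MainPure


section Final
open MeasureTheory

lemma W_eq_Wr {Ω : Type*} [MeasurableSpace Ω] {P : Measure Ω} [IsProbabilityMeasure P]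
    {C : ℕ → Ω → ℕ} {p : ℕ → ℝ} {v : ℝ}
    (hC : ∀ i, Measurable (C i))
    (hindep : ProbabilityTheory.iIndepFun C P)
    (hdist : ∀ i k, P {ω | C i ω = k} = ENNReal.ofReal (p k))
    (hv0 : 0 ≤ v) (hv1 : v ≤ 1) (x : ℕ) :
    W P C v (p 0) (x : ℤ) = Wr v p x := by
  have hq1 : ∀ y b, QE v p y b ≤ 1 := fun y b => QE_le_one hC hindep hdist hv0 hv1 y b
  rw [W, if_pos (Int.natCast_nonneg x)]
  rw [Eind_eq_QE hC hindep hdist hv0 hv1 x, Qr_eq hq1 x, Wr]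


end Final

/-- The generating function (z-transform) of the scale function `W_v`:
for `z ∈ (0, φ_v)`, `p̃(z) - z/v > 0`, the series converges, and it equals `1/(p̃(z)-z/v)`. -/
theorem W_generating_function
    (P : Measure Ω) [IsProbabilityMeasure P]
    (C : ℕ → Ω → ℕ) (p : ℕ → ℝ)
    (hC : ∀ i, Measurable (C i))
    (hindep : ProbabilityTheory.iIndepFun C P)
    (hdist : ∀ i k, P {ω | C i ω = k} = ENNReal.ofReal (p k))
    (hnn : ∀ k, 0 ≤ p k) (hsum : ∑' k, p k = 1) (hp0 : 0 < p 0)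
    (v : ℝ) (hv : v ∈ Set.Ioc (0 : ℝ) 1)
    (φv : ℝ) (hφ : IsLeast {ξ : ℝ | ξ ∈ Set.Ioc (0 : ℝ) 1 ∧ ξ = v * ptilde p ξ} φv) :
    ∀ z : ℝ, z ∈ Set.Ioo 0 φv →
      0 < ptilde p z - z / v ∧
      Summable (fun x : ℕ => z ^ x * W P C v (p 0) x) ∧
      ∑' x : ℕ, z ^ x * W P C v (p 0) x = 1 / (ptilde p z - z / v) := by
  intro z hzmem
  obtain ⟨hv0, hv1⟩ := hv
  have hq1 : ∀ y b, QE v p y b ≤ 1 := fun y b => QE_le_one hC hindep hdist hv0.le hv1 y b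
  have hmain := main_pure hq1 hnn hsum hp0 ⟨hv0, hv1⟩ hφ hzmem
  have hWeq : (fun x : ℕ => z ^ x * W P C v (p 0) (x : ℤ)) = fun x : ℕ => z ^ x * Wr v p x :=
    funext fun x => by rw [W_eq_Wr hC hindep hdist hv0.le hv1 x]
  refine ⟨hmain.1, ?_, ?_⟩
  · rw [hWeq]
    exact hmain.2.1
  · rw [hWeq]
    exact hmain.2.2


end RW
end
end
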